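/- arXiv:math/0605469 — 2 statements merged into one kernel-verified Lean document; each statement's English description precedes it below -/
import Mathlib

section
/- If a compact Hausdorff space Y is I-favorable, then the hyperspace exp(Y) with the Vietoris topology is universally Kuratowski-Ulam*: for every topological space X and every nowhere dense E ⊆ X × exp(Y), the set {x ∈ X : E_x is not nowhere dense in exp(Y)} is meager. -/
open Set TopologicalSpace

variable (X : Type*) [TopologicalSpace X]

/-- A valid move of Player I: a finite family of nonempty open sets. -/
def IMove (A : Set (Set X)) : Prop :=
  A.Finite ∧ ∀ U ∈ A, IsOpen U ∧ U.Nonempty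

/-- A valid response of Player II to the family `A`: a finite family of nonempty
open sets such that every member of `A` contains some member of `B`. -/
def IIMove (A B : Set (Set X)) : Prop :=
  IMove X B ∧ ∀ U ∈ A, ∃ V ∈ B, V ⊆ U

/-- `X` is I-favorable: Player I has a winning strategy in the finite open-open
game. A strategy is a function from histories of Player II's moves to the next
move of Player I; it is winning if for every play in which Player II always
responds validly, each tail union of Player II's families is dense. -/
def IFavorable : Prop :=
  ∃ σ : List (Set (Set X)) → Set (Set X),
    (∀ hist, IMove X (σ hist)) ∧
    ∀ B : ℕ → Set (Set X),
      (∀ n, IIMove X (σ ((List.range n).map B)) (B n)) →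
      ∀ k, Dense (⋃ (n : ℕ) (_ : k ≤ n), ⋃₀ B n)

/-- Player II has a winning strategy in the finite open-open game: a function
from histories of Player I's moves to responses of Player II which are valid,
and such that whenever Player I plays validly, some tail union of Player II's
families fails to be dense. -/
def IIFavorable : Prop :=
  ∃ τ : List (Set (Set X)) → Set (Set X),
    ∀ A : ℕ → Set (Set X), (∀ n, IMove X (A n)) →
      (∀ n, IIMove X (A n) (τ ((List.range (n + 1)).map A))) ∧
      ∃ k, ¬ Dense (⋃ (n : ℕ) (_ : k ≤ n), ⋃₀ τ ((List.range (n + 1)).map A))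

/-- `Q` is a π-base for `X`: a family of nonempty open sets such that every
nonempty open set contains a member of the family. -/
def IsPiBase (Q : Set (Set X)) : Prop :=
  (∀ U ∈ Q, IsOpen U ∧ U.Nonempty) ∧
  ∀ V : Set X, IsOpen V → V.Nonempty → ∃ U ∈ Q, U ⊆ V

/-- `C` is a club filter with respect to the π-base `Q`. -/
def IsClubFilter (Q : Set (Set X)) (C : Set (Set (Set X))) : Prop :=
  (∀ P ∈ C, P.Countable ∧ P ⊆ Q) ∧
  (∀ P : ℕ → Set (Set X), (∀ n, P n ∈ C) → Monotone P → (⋃ n, P n) ∈ C) ∧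
  (∀ A : Set (Set X), A.Countable → A ⊆ Q → ∃ P ∈ C, A ⊆ P) ∧
  (∀ V : Set X, IsOpen V → V.Nonempty →
    ∀ P ∈ C, ∃ W ∈ P, ∀ U ∈ P, U ⊆ W → (U ∩ V).Nonempty)

/-- The hyperspace of nonempty closed subsets of `X`. -/
def Hyper (X : Type*) [TopologicalSpace X] : Type _ :=
  {A : Set X // IsClosed A ∧ A.Nonempty}

/-- The Vietoris basic open set `⟨V₁,…,Vₙ⟩` determined by a list of open sets:
all nonempty closed sets contained in the union and meeting each member. -/
def vietorisBasic {X : Type*} [TopologicalSpace X] (L : List (Set X)) :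
    Set (Hyper X) :=
  {A | A.1 ⊆ ⋃₀ {V | V ∈ L} ∧ ∀ V ∈ L, (A.1 ∩ V).Nonempty}

/-- The Vietoris topology on the hyperspace, generated by the basic sets
`⟨V₁,…,Vₙ⟩` for nonempty finite lists of open sets. -/
instance (X : Type*) [TopologicalSpace X] : TopologicalSpace (Hyper X) :=
  TopologicalSpace.generateFrom
    {S | ∃ L : List (Set X), L ≠ [] ∧ (∀ V ∈ L, IsOpen V) ∧ S = vietorisBasic L}

namespace HUK
set_option linter.unusedSectionVars false
set_option linter.unusedVariables false

attribute [local instance] Classical.propDecidable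

variable {Y : Type*} [TopologicalSpace Y]

lemma mem_vb {L : List (Set Y)} {A : Hyper Y} :
    A ∈ vietorisBasic L ↔ (∀ a ∈ A.1, ∃ V ∈ L, a ∈ V) ∧ ∀ V ∈ L, (A.1 ∩ V).Nonempty := by
  constructor
  · rintro ⟨h1, h2⟩
    exact ⟨fun a ha => by rcases h1 ha with ⟨V, hV, haV⟩; exact ⟨V, hV, haV⟩, h2⟩
  · rintro ⟨h1, h2⟩
    refine ⟨fun a ha => ?_, h2⟩
    rcases h1 a ha with ⟨V, hV, haV⟩
    exact ⟨V, hV, haV⟩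

/-- The key refinement lemma: a common refinement of two Vietoris basics around `A`. -/
lemma refine (L₁ L₂ : List (Set Y)) (A : Hyper Y)
    (h₁ : A ∈ vietorisBasic L₁) (h₂ : A ∈ vietorisBasic L₂) :
    ∃ η : List (Set Y), η ≠ [] ∧
      (∀ W ∈ η, (A.1 ∩ W).Nonempty ∧ ∃ e₁ ∈ L₁, ∃ e₂ ∈ L₂, W = e₁ ∩ e₂) ∧
      (∀ e ∈ L₁, ∃ W ∈ η, W ⊆ e) ∧ (∀ e ∈ L₂, ∃ W ∈ η, W ⊆ e) ∧
      A ∈ vietorisBasic η ∧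
      vietorisBasic η ⊆ vietorisBasic L₁ ∧ vietorisBasic η ⊆ vietorisBasic L₂ := by
  rw [mem_vb] at h₁ h₂
  set η : List (Set Y) :=
    ((L₁.product L₂).filter fun p => decide ((A.1 ∩ (p.1 ∩ p.2)).Nonempty)).map
      fun p => p.1 ∩ p.2 with hη
  have memη : ∀ W, W ∈ η ↔ ∃ e₁ ∈ L₁, ∃ e₂ ∈ L₂,
      (A.1 ∩ (e₁ ∩ e₂)).Nonempty ∧ W = e₁ ∩ e₂ := by
    intro W
    constructor
    · intro hW
      rcases List.mem_map.1 hW with ⟨p, hp, rfl⟩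
      rcases List.mem_filter.1 hp with ⟨hpp, hd⟩
      rcases List.mem_product.1 hpp with ⟨m1, m2⟩
      exact ⟨p.1, m1, p.2, m2, of_decide_eq_true hd, rfl⟩
    · rintro ⟨e₁, m1, e₂, m2, hne, rfl⟩
      exact List.mem_map.2 ⟨(e₁, e₂),
        List.mem_filter.2 ⟨List.mem_product.2 ⟨m1, m2⟩, decide_eq_true hne⟩, rfl⟩
  have pairmem : ∀ a ∈ A.1, ∃ e₁ ∈ L₁, ∃ e₂ ∈ L₂, a ∈ e₁ ∧ a ∈ e₂ := by
    intro a ha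
    rcases h₁.1 a ha with ⟨e₁, m1, h1⟩
    rcases h₂.1 a ha with ⟨e₂, m2, h2⟩
    exact ⟨e₁, m1, e₂, m2, h1, h2⟩
  have hL1 : ∀ e ∈ L₁, ∃ W ∈ η, W ⊆ e := by
    intro e he
    rcases h₁.2 e he with ⟨a, haA, hae⟩
    rcases h₂.1 a haA with ⟨e₂, m2, h2⟩
    refine ⟨e ∩ e₂, (memη _).2 ⟨e, he, e₂, m2, ⟨a, haA, hae, h2⟩, rfl⟩, inter_subset_left⟩
  have hL2 : ∀ e ∈ L₂, ∃ W ∈ η, W ⊆ e := by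
    intro e he
    rcases h₂.2 e he with ⟨a, haA, hae⟩
    rcases h₁.1 a haA with ⟨e₁, m1, h1⟩
    refine ⟨e₁ ∩ e, (memη _).2 ⟨e₁, m1, e, he, ⟨a, haA, h1, hae⟩, rfl⟩, inter_subset_right⟩
  have hAη : A ∈ vietorisBasic η := by
    rw [mem_vb]
    constructor
    · intro a ha
      rcases pairmem a ha with ⟨e₁, m1, e₂, m2, h1, h2⟩
      exact ⟨e₁ ∩ e₂, (memη _).2 ⟨e₁, m1, e₂, m2, ⟨a, ha, h1, h2⟩, rfl⟩, h1, h2⟩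
    · intro W hW
      rcases (memη W).1 hW with ⟨e₁, _, e₂, _, hne, rfl⟩
      exact hne
  have hne : η ≠ [] := by
    rcases A.2.2 with ⟨a, ha⟩
    rcases pairmem a ha with ⟨e₁, m1, e₂, m2, h1, h2⟩
    have : e₁ ∩ e₂ ∈ η := (memη _).2 ⟨e₁, m1, e₂, m2, ⟨a, ha, h1, h2⟩, rfl⟩
    exact List.ne_nil_of_mem this
  have hsub1 : vietorisBasic η ⊆ vietorisBasic L₁ := by
    intro B hB
    rw [mem_vb] at hB ⊢
    constructor
    · intro b hb
      rcases hB.1 b hb with ⟨W, hW, hbW⟩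
      rcases (memη W).1 hW with ⟨e₁, m1, e₂, m2, _, rfl⟩
      exact ⟨e₁, m1, hbW.1⟩
    · intro e he
      rcases hL1 e he with ⟨W, hW, hWe⟩
      rcases hB.2 W hW with ⟨b, hbB, hbW⟩
      exact ⟨b, hbB, hWe hbW⟩
  have hsub2 : vietorisBasic η ⊆ vietorisBasic L₂ := by
    intro B hB
    rw [mem_vb] at hB ⊢
    constructor
    · intro b hb
      rcases hB.1 b hb with ⟨W, hW, hbW⟩
      rcases (memη W).1 hW with ⟨e₁, m1, e₂, m2, _, rfl⟩
      exact ⟨e₂, m2, hbW.2⟩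
    · intro e he
      rcases hL2 e he with ⟨W, hW, hWe⟩
      rcases hB.2 W hW with ⟨b, hbB, hbW⟩
      exact ⟨b, hbB, hWe hbW⟩
  refine ⟨η, hne, ?_, hL1, hL2, hAη, hsub1, hsub2⟩
  intro W hW
  rcases (memη W).1 hW with ⟨e₁, m1, e₂, m2, hne', rfl⟩
  exact ⟨hne', e₁, m1, e₂, m2, rfl⟩

def hyperBasis (Y : Type*) [TopologicalSpace Y] : Set (Set (Hyper Y)) :=
  {S | ∃ L : List (Set Y), L ≠ [] ∧ (∀ V ∈ L, IsOpen V) ∧ S = vietorisBasic L}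

lemma isBasis : IsTopologicalBasis (hyperBasis Y) := by
  refine ⟨?_, ?_, rfl⟩
  · rintro t₁ ⟨L₁, hL₁ne, hL₁o, rfl⟩ t₂ ⟨L₂, hL₂ne, hL₂o, rfl⟩ A ⟨h₁, h₂⟩
    rcases refine L₁ L₂ A h₁ h₂ with ⟨η, hne, hstr, _, _, hAη, hs1, hs2⟩
    refine ⟨vietorisBasic η, ⟨η, hne, ?_, rfl⟩, hAη, subset_inter hs1 hs2⟩
    intro W hW
    rcases (hstr W hW).2 with ⟨e₁, m1, e₂, m2, rfl⟩
    exact (hL₁o e₁ m1).inter (hL₂o e₂ m2)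
  · apply eq_univ_of_forall
    intro A
    refine mem_sUnion.2 ⟨vietorisBasic [univ], ⟨[univ], by simp, by simp, rfl⟩, ?_, ?_⟩
    · intro a _
      exact ⟨univ, by simp, trivial⟩
    · intro V hV
      simp only [List.mem_singleton] at hV
      subst hV
      simpa using A.2.2


lemma vb_open {L : List (Set Y)} (hne : L ≠ []) (ho : ∀ V ∈ L, IsOpen V) :
    IsOpen (vietorisBasic L) :=
  isBasis.isOpen ⟨L, hne, ho, rfl⟩

lemma vb_nonempty [T2Space Y] {τ : List (Set Y)} (hτ : τ ≠ [])
    (hg : ∀ e ∈ τ, (e : Set Y).Nonempty) : (vietorisBasic τ).Nonempty := by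
  rcases List.exists_mem_of_ne_nil τ hτ with ⟨e₀, he₀⟩
  rcases hg e₀ he₀ with ⟨y₀, _⟩
  set pt : Set Y → Y := fun e => if h : e.Nonempty then h.choose else y₀ with hpt
  have hptmem : ∀ e ∈ τ, pt e ∈ e := by
    intro e he
    have h := hg e he
    simp only [hpt, dif_pos h]
    exact h.choose_spec
  set F : Set Y := pt '' {e | e ∈ τ} with hF
  have hFfin : F.Finite := (List.finite_toSet τ).image _
  have hFne : F.Nonempty := ⟨pt e₀, ⟨e₀, he₀, rfl⟩⟩
  refine ⟨⟨F, hFfin.isClosed, hFne⟩, ?_, ?_⟩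
  · rintro y ⟨e, he, rfl⟩
    exact ⟨e, he, hptmem e he⟩
  · intro V hV
    exact ⟨pt V, ⟨V, hV, rfl⟩, hptmem V hV⟩

/-- Structural requirements on the entries `η` of a refined basic relative to a probe `τ`. -/
def EntryStruct (τ η : List (Set Y)) : Prop :=
  (∀ U ∈ η, IsOpen U ∧ U.Nonempty ∧ ∃ e ∈ τ, U ⊆ e) ∧ ∀ e ∈ τ, ∃ U ∈ η, U ⊆ e

section Stock

variable [T2Space Y]
variable (σ : List (Set (Set Y)) → Set (Set Y))

/-- A recorded step: a finite list of (probe, refined entries) pairs. -/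
abbrev Step (Y : Type*) := List (List (Set Y) × List (Set Y))

def entriesOf (β : Step Y) : Set (Set Y) := {U | ∃ p ∈ β, U ∈ p.2}

def hists (Q : Set (Set Y)) (n : ℕ) : Set (List (Set (Set Y))) :=
  {l | l.length ≤ n ∧ ∀ A ∈ l, A ⊆ Q ∧ A.Finite}

def sHull (Q : Set (Set Y)) (n : ℕ) : Set (Set Y) := ⋃ l ∈ hists Q n, σ l

def stock : List (Step Y) → Set (Set Y)
  | [] => ∅
  | β :: h => stock h ∪ entriesOf β ∪ sHull σ (stock h) (h.length + 1)

def Probes (h : List (Step Y)) : Set (List (Set Y)) :=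
  {τ | τ ≠ [] ∧ τ.length ≤ h.length + 1 ∧ ∀ e ∈ τ, e ∈ stock σ h}

lemma finite_lists {α : Type*} {T : Set α} (hT : T.Finite) :
    ∀ n : ℕ, {l : List α | l.length ≤ n ∧ ∀ a ∈ l, a ∈ T}.Finite := by
  intro n
  induction n with
  | zero =>
    apply Set.Finite.subset (Set.finite_singleton ([] : List α))
    rintro l ⟨hl, -⟩
    simp [List.length_eq_zero_iff.1 (Nat.le_zero.1 hl)]
  | succ n ih =>
    apply Set.Finite.subset ((Set.finite_singleton ([] : List α)).union
      ((hT.prod ih).image (fun p => p.1 :: p.2)))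
    rintro l ⟨hl, hm⟩
    cases l with
    | nil => exact Or.inl rfl
    | cons a t =>
      refine Or.inr ⟨(a, t), ⟨hm a (by simp), ⟨Nat.le_of_succ_le_succ hl,
        fun b hb => hm b (by simp [hb])⟩⟩, rfl⟩

lemma entriesOf_finite (β : Step Y) : (entriesOf β).Finite := by
  have : entriesOf β = ⋃ p ∈ {q | q ∈ β}, {U | U ∈ p.2} := by
    ext U; simp [entriesOf]
  rw [this]
  exact (List.finite_toSet β).biUnion (fun p _ => List.finite_toSet p.2)

variable (hσ1 : ∀ hist, IMove Y (σ hist))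

include hσ1 in
lemma sHull_finite {Q : Set (Set Y)} (hQ : Q.Finite) (n : ℕ) : (sHull σ Q n).Finite := by
  have h1 : {A : Set (Set Y) | A ⊆ Q ∧ A.Finite}.Finite :=
    hQ.finite_subsets.subset (fun A hA => hA.1)
  have h2 : (hists Q n : Set (List (Set (Set Y)))).Finite := by
    apply (finite_lists h1 n).subset
    rintro l ⟨hl, hm⟩
    exact ⟨hl, fun a ha => hm a ha⟩
  exact h2.biUnion (fun l _ => (hσ1 l).1)

include hσ1 in
lemma stock_finite : ∀ h : List (Step Y), (stock σ h).Finite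
  | [] => Set.finite_empty
  | β :: h => ((stock_finite h).union (entriesOf_finite β)).union
      (sHull_finite σ hσ1 (stock_finite h) _)

include hσ1 in
lemma Probes_finite (h : List (Step Y)) : (Probes σ h).Finite := by
  apply (finite_lists (stock_finite σ hσ1 h) (h.length + 1)).subset
  rintro τ ⟨-, h1, h2⟩
  exact ⟨h1, h2⟩

def ValidHist : List (Step Y) → Prop
  | [] => True
  | β :: h => ValidHist h ∧ (∀ τ ∈ Probes σ h, ∃ η, (τ, η) ∈ β) ∧
      ∀ p ∈ β, EntryStruct p.1 p.2

include hσ1 in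
lemma stock_good : ∀ h : List (Step Y), ValidHist σ h →
    ∀ U ∈ stock σ h, IsOpen U ∧ U.Nonempty
  | [], _ => by intro U hU; exact absurd hU (by simp [stock])
  | β :: h, hv => by
    intro U hU
    rcases hU with (hU | hU) | hU
    · exact stock_good h hv.1 U hU
    · rcases hU with ⟨p, hp, hUp⟩
      rcases (hv.2.2 p hp).1 U hUp with ⟨h1, h2, -⟩
      exact ⟨h1, h2⟩
    · rcases mem_iUnion₂.1 hU with ⟨l, -, hUl⟩
      exact (hσ1 l).2 U hUl

lemma stock_mono {h : List (Step Y)} {β : Step Y} : stock σ h ⊆ stock σ (β :: h) :=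
  fun U hU => Or.inl (Or.inl hU)

end Stock


section Key

variable [T2Space Y] (σ : List (Set (Set Y)) → Set (Set Y))
variable (hσ1 : ∀ hist, IMove Y (σ hist))
variable (hσ2 : ∀ B : ℕ → Set (Set Y),
    (∀ n, IIMove Y (σ ((List.range n).map B)) (B n)) →
    ∀ k, Dense (⋃ (n : ℕ) (_ : k ≤ n), ⋃₀ B n))

include hσ1 hσ2 in
/-- The key property: a family of nonempty open sets closed under the strategy `σ`
satisfies the club-filter clause (4). -/
lemma key (P : Set (Set Y)) (hP1 : ∀ U ∈ P, IsOpen U ∧ U.Nonempty)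
    (hP2 : ∀ l : List (Set (Set Y)), (∀ A ∈ l, A ⊆ P ∧ A.Finite) → σ l ⊆ P)
    (V : Set Y) (hV : IsOpen V) (hVne : V.Nonempty) :
    ∃ W ∈ P, ∀ U ∈ P, U ⊆ W → (U ∩ V).Nonempty := by
  by_contra hcon
  push_neg at hcon
  have hcon' : ∀ W ∈ P, ∃ U ∈ P, U ⊆ W ∧ U ∩ V = ∅ := by
    intro W hW
    rcases hcon W hW with ⟨U, hU, hUW, hUV⟩
    exact ⟨U, hU, hUW, hUV⟩
  have hu : ∀ W : Set Y, ∃ U : Set Y, W ∈ P → U ∈ P ∧ U ⊆ W ∧ U ∩ V = ∅ := by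
    intro W
    by_cases hW : W ∈ P
    · rcases hcon' W hW with ⟨U, h1, h2, h3⟩
      exact ⟨U, fun _ => ⟨h1, h2, h3⟩⟩
    · exact ⟨∅, fun h => absurd h hW⟩
  choose u huspec using hu
  set Hs : ℕ → List (Set (Set Y)) :=
    fun n => Nat.rec [] (fun _ ih => ih ++ [u '' σ ih]) n with hHs
  set B : ℕ → Set (Set Y) := fun n => u '' σ (Hs n) with hB
  have hstep : ∀ n, Hs (n + 1) = Hs n ++ [B n] := fun n => rfl
  have hmap : ∀ n, (List.range n).map B = Hs n := by
    intro n
    induction n with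
    | zero => rfl
    | succ n ih => rw [List.range_succ, List.map_append, ih, hstep]; rfl
  have hinv : ∀ n, ∀ A ∈ Hs n, A ⊆ P ∧ A.Finite := by
    intro n
    induction n with
    | zero => intro A hA; exact absurd hA List.not_mem_nil
    | succ n ih =>
      intro A hA
      rw [hstep] at hA
      rcases List.mem_append.1 hA with hA | hA
      · exact ih A hA
      · rcases List.mem_singleton.1 hA with rfl
        have hσP : σ (Hs n) ⊆ P := hP2 (Hs n) ih
        constructor
        · rintro U' ⟨W, hW, rfl⟩
          exact (huspec W (hσP hW)).1
        · exact ((hσ1 (Hs n)).1).image u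
  have hσP : ∀ n, σ (Hs n) ⊆ P := fun n => hP2 (Hs n) (hinv n)
  have hvalid : ∀ n, IIMove Y (σ ((List.range n).map B)) (B n) := by
    intro n
    rw [hmap n]
    constructor
    · constructor
      · exact ((hσ1 (Hs n)).1).image u
      · rintro U' ⟨W, hW, rfl⟩
        exact hP1 _ (huspec W (hσP n hW)).1
    · intro W hW
      exact ⟨u W, ⟨W, hW, rfl⟩, (huspec W (hσP n hW)).2.1⟩
  have hdense := hσ2 B hvalid 0
  rcases hdense.inter_open_nonempty V hV hVne with ⟨y, hyV, hy⟩
  rcases mem_iUnion₂.1 hy with ⟨n, -, hy⟩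
  rcases hy with ⟨s, hs, hys⟩
  rcases hs with ⟨W, hW, rfl⟩
  have := (huspec W (hσP n hW)).2.2
  exact absurd (this ▸ (⟨hys, hyV⟩ : y ∈ u W ∩ V)) (notMem_empty y)

end Key

section Main

variable [T2Space Y] {Z : Type*} [TopologicalSpace Z]
variable (σ : List (Set (Set Y)) → Set (Set Y)) (D : Set (Z × Hyper Y))

/-- Extraction of a box inside `D` below a probe. -/
lemma extract (hDo : IsOpen D) (hDd : Dense D) (H₀ : Set Z) (hH : IsOpen H₀)
    (hne : H₀.Nonempty) (τ : List (Set Y)) (hτ : τ ≠ [])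
    (hτg : ∀ e ∈ τ, IsOpen e ∧ e.Nonempty) :
    ∃ H' : Set Z, ∃ η : List (Set Y), IsOpen H' ∧ H'.Nonempty ∧ H' ⊆ H₀ ∧
      EntryStruct τ η ∧ H' ×ˢ vietorisBasic η ⊆ D := by
  have hvbne : (vietorisBasic τ).Nonempty := vb_nonempty hτ (fun e he => (hτg e he).2)
  have hvbo : IsOpen (vietorisBasic τ) := vb_open hτ (fun e he => (hτg e he).1)
  have hbox : (H₀ ×ˢ vietorisBasic τ).Nonempty := hne.prod hvbne
  have hboxo : IsOpen (H₀ ×ˢ vietorisBasic τ) := hH.prod hvbo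
  rcases hDd.inter_open_nonempty _ hboxo hbox with ⟨⟨x, A⟩, ⟨hxH, hAτ⟩, hxD⟩
  rcases isOpen_prod_iff.1 hDo x A hxD with ⟨u, v, huo, hvo, hxu, hAv, huv⟩
  rcases isBasis.exists_subset_of_mem_open hAv hvo with ⟨t, ⟨L, hLne, hLo, rfl⟩, hAL, hLv⟩
  rcases refine L τ A hAL hAτ with ⟨η, hηne, hstr, _, hcov, hAη, hs1, _⟩
  refine ⟨u ∩ H₀, η, huo.inter hH, ⟨x, hxu, hxH⟩, inter_subset_right, ⟨?_, hcov⟩, ?_⟩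
  · intro W hW
    rcases hstr W hW with ⟨hWA, e₁, m1, e₂, m2, rfl⟩
    exact ⟨(hLo e₁ m1).inter (hτg e₂ m2).1, ⟨hWA.choose, hWA.choose_spec.2⟩,
      e₂, m2, inter_subset_right⟩
  · rintro ⟨x', B⟩ ⟨hx', hB⟩
    exact huv ⟨hx'.1, hLv (hs1 hB)⟩

def DOK (H : Set Z) (h : List (Step Y)) : Prop :=
  ∀ β ∈ h, ∀ p ∈ β, H ×ˢ vietorisBasic p.2 ⊆ D

lemma DOK_mono {H H' : Set Z} {h : List (Step Y)} (hs : H' ⊆ H) (hd : DOK D H h) :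
    DOK D H' h := by
  intro β hβ p hp
  exact fun z hz => hd β hβ p hp ⟨hs hz.1, hz.2⟩

/-- A node of the tree: an open subset of `Z` together with the (reversed) history. -/
def Valid (ν : Set Z × List (Step Y)) : Prop :=
  IsOpen ν.1 ∧ ν.1.Nonempty ∧ ValidHist σ ν.2 ∧ DOK D ν.1 ν.2

def childrenOf (ν : Set Z × List (Step Y)) : Set (Set Z × List (Step Y)) :=
  {μ | Valid σ D μ ∧ μ.1 ⊆ ν.1 ∧ ∃ β, μ.2 = β :: ν.2}

variable (hσ1 : ∀ hist, IMove Y (σ hist)) (hDo : IsOpen D) (hDd : Dense D)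

include hDo hDd in
lemma extract_list (H₀ : Set Z) (hH : IsOpen H₀) (hne : H₀.Nonempty)
    (ts : List (List (Set Y)))
    (hts : ∀ τ ∈ ts, τ ≠ [] ∧ ∀ e ∈ τ, IsOpen e ∧ e.Nonempty) :
    ∃ H' : Set Z, ∃ β : Step Y, IsOpen H' ∧ H'.Nonempty ∧ H' ⊆ H₀ ∧
      (∀ p ∈ β, EntryStruct p.1 p.2 ∧ H' ×ˢ vietorisBasic p.2 ⊆ D) ∧
      ∀ τ ∈ ts, ∃ η, (τ, η) ∈ β := by
  induction ts with
  | nil => exact ⟨H₀, [], hH, hne, Subset.rfl, by simp, by simp⟩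
  | cons τ ts ih =>
    rcases ih (fun τ' hτ' => hts τ' (by simp [hτ'])) with
      ⟨H₁, β₁, hH₁, hne₁, hsub₁, hβ₁, hcov₁⟩
    rcases extract D hDo hDd H₁ hH₁ hne₁ τ (hts τ (by simp)).1 (hts τ (by simp)).2 with
      ⟨H', η, hH', hne', hsub', hstr', hbox'⟩
    refine ⟨H', (τ, η) :: β₁, hH', hne', hsub'.trans hsub₁, ?_, ?_⟩
    · intro p hp
      rcases List.mem_cons.1 hp with rfl | hp
      · exact ⟨hstr', hbox'⟩
      · exact ⟨(hβ₁ p hp).1, fun z hz => (hβ₁ p hp).2 ⟨hsub' hz.1, hz.2⟩⟩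
    · intro τ' hτ'
      rcases List.mem_cons.1 hτ' with rfl | hτ'
      · exact ⟨η, by simp⟩
      · rcases hcov₁ τ' hτ' with ⟨η', hη'⟩
        exact ⟨η', by simp [hη']⟩

include hσ1 hDo hDd in
lemma child_exists (ν : Set Z × List (Step Y)) (hν : Valid σ D ν) (H₀ : Set Z)
    (hH₀ : IsOpen H₀) (hne : H₀.Nonempty) (hsub : H₀ ⊆ ν.1) :
    ∃ μ ∈ childrenOf σ D ν, μ.1 ⊆ H₀ := by
  set ts := (Probes_finite σ hσ1 ν.2).toFinset.toList with hts
  have hmem : ∀ τ, τ ∈ ts ↔ τ ∈ Probes σ ν.2 := by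
    intro τ
    rw [hts, Finset.mem_toList, Set.Finite.mem_toFinset]
  rcases extract_list D hDo hDd H₀ hH₀ hne ts (fun τ hτ => by
      rcases (hmem τ).1 hτ with ⟨h1, h2, h3⟩
      exact ⟨h1, fun e he => stock_good σ hσ1 ν.2 hν.2.2.1 e (h3 e he)⟩) with
    ⟨H', β, hH', hne', hsub', hβ, hcov⟩
  have hdok : DOK D H' (β :: ν.2) := by
    intro β' hβ'
    rcases List.mem_cons.1 hβ' with rfl | hβ'
    · exact fun p hp => (hβ p hp).2
    · exact fun p hp z hz => hν.2.2.2 β' hβ' p hp ⟨(hsub'.trans hsub) hz.1, hz.2⟩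
  have hvh : ValidHist σ (β :: ν.2) :=
    ⟨hν.2.2.1, fun τ hτ => hcov τ ((hmem τ).2 hτ), fun p hp => (hβ p hp).1⟩
  exact ⟨(H', β :: ν.2), ⟨⟨hH', hne', hvh, hdok⟩, hsub'.trans hsub, β, rfl⟩, hsub'⟩

def PWD (F : Set (Set Z × List (Step Y))) : Prop :=
  F.Pairwise fun μ μ' => μ.1 ∩ μ'.1 = ∅

lemma maxD_exists (ν : Set Z × List (Step Y)) :
    ∃ F, (F ⊆ childrenOf σ D ν ∧ PWD F) ∧
      ∀ F', F' ⊆ childrenOf σ D ν → PWD F' → F ⊆ F' → F' = F := by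
  have hchaincond : ∀ c ⊆ {F | F ⊆ childrenOf σ D ν ∧ PWD F},
      IsChain (fun x1 x2 => x1 ⊆ x2) c → ∃ ub ∈ {F | F ⊆ childrenOf σ D ν ∧ PWD F},
        ∀ s ∈ c, s ⊆ ub := by
    intro c hc hchain
    refine ⟨⋃₀ c, ⟨?_, ?_⟩, fun s hs => subset_sUnion_of_mem hs⟩
    · exact sUnion_subset (fun s hs => (hc hs).1)
    · intro μ hμ μ' hμ' hne
      rcases hμ with ⟨s, hs, hμs⟩
      rcases hμ' with ⟨s', hs', hμ's'⟩
      rcases hchain.total hs hs' with h | h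
      · exact (hc hs').2 (h hμs) hμ's' hne
      · exact (hc hs).2 hμs (h hμ's') hne
  rcases zorn_subset {F | F ⊆ childrenOf σ D ν ∧ PWD F} hchaincond with ⟨F, hF⟩
  exact ⟨F, hF.1, fun F' h1 h2 h3 => (hF.2 ⟨h1, h2⟩ h3).antisymm h3⟩

def maxD (ν : Set Z × List (Step Y)) : Set (Set Z × List (Step Y)) :=
  (maxD_exists σ D ν).choose

lemma maxD_sub (ν) : maxD σ D ν ⊆ childrenOf σ D ν :=
  (maxD_exists σ D ν).choose_spec.1.1

lemma maxD_pwd (ν) : PWD (maxD σ D ν) :=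
  (maxD_exists σ D ν).choose_spec.1.2

lemma maxD_max (ν) : ∀ F', F' ⊆ childrenOf σ D ν → PWD F' → maxD σ D ν ⊆ F' →
    F' = maxD σ D ν :=
  (maxD_exists σ D ν).choose_spec.2

include hσ1 hDo hDd in
lemma maxD_dense (ν : Set Z × List (Step Y)) (hν : Valid σ D ν) (O : Set Z)
    (hO : IsOpen O) (hOne : (O ∩ ν.1).Nonempty) :
    ∃ μ ∈ maxD σ D ν, (O ∩ μ.1).Nonempty := by
  by_contra hcon
  push_neg at hcon
  have hcon' : ∀ μ ∈ maxD σ D ν, O ∩ μ.1 = ∅ := hcon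
  rcases child_exists σ D hσ1 hDo hDd ν hν (O ∩ ν.1) (hO.inter hν.1) hOne
    inter_subset_right with ⟨c, hc, hcsub⟩
  have hcnotin : c ∉ maxD σ D ν := by
    intro hcin
    have heq := hcon' c hcin
    have hc1 : c.1 ⊆ O := fun z hz => (hcsub hz).1
    rcases hc.1.2.1 with ⟨z, hz⟩
    exact absurd (heq ▸ (⟨hc1 hz, hz⟩ : z ∈ O ∩ c.1)) (notMem_empty z)
  have : insert c (maxD σ D ν) = maxD σ D ν := by
    apply maxD_max
    · intro μ hμ
      rcases hμ with rfl | hμ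
      · exact hc
      · exact maxD_sub σ D ν hμ
    · intro μ hμ μ' hμ' hne
      have key : ∀ μ'' ∈ maxD σ D ν, c.1 ∩ μ''.1 = ∅ := by
        intro μ'' hμ''
        have h1 : c.1 ⊆ O := fun z hz => (hcsub hz).1
        rw [← subset_empty_iff, ← hcon' μ'' hμ'']
        exact fun z hz => ⟨h1 hz.1, hz.2⟩
      rcases hμ with rfl | hμ <;> rcases hμ' with rfl | hμ'
      · exact absurd rfl hne
      · exact key μ' hμ'
      · rw [inter_comm]; exact key μ hμ
      · exact maxD_pwd σ D ν hμ hμ' hne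
    · exact subset_insert c _
  exact hcnotin (this ▸ mem_insert c _)

def level : ℕ → Set (Set Z × List (Step Y))
  | 0 => maxD σ D (univ, [])
  | n + 1 => ⋃ μ ∈ level n, maxD σ D μ

def openLevel (n : ℕ) : Set Z := ⋃ μ ∈ level σ D n, μ.1

variable (hZ : (univ : Set Z).Nonempty)

include hZ in
lemma root_valid : Valid σ D ((univ : Set Z), ([] : List (Step Y))) :=
  ⟨isOpen_univ, hZ, trivial, by intro β hβ; exact absurd hβ List.not_mem_nil⟩

lemma level_parent {n : ℕ} {μ} (hμ : μ ∈ level σ D (n + 1)) :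
    ∃ ν ∈ level σ D n, μ ∈ maxD σ D ν := by
  rcases mem_iUnion₂.1 hμ with ⟨ν, hν, hμν⟩
  exact ⟨ν, hν, hμν⟩

include hZ in
lemma level_valid : ∀ n, ∀ μ ∈ level σ D n, Valid σ D μ := by
  intro n
  induction n with
  | zero => exact fun μ hμ => (maxD_sub σ D _ hμ).1
  | succ n ih =>
    intro μ hμ
    rcases level_parent σ D hμ with ⟨ν, hν, hμν⟩
    exact (maxD_sub σ D ν hμν).1

lemma level_child {n : ℕ} {μ} (hμ : μ ∈ level σ D (n + 1)) :
    ∃ ν ∈ level σ D n, μ ∈ childrenOf σ D ν := by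
  rcases level_parent σ D hμ with ⟨ν, hν, hμν⟩
  exact ⟨ν, hν, maxD_sub σ D ν hμν⟩

include hZ in
lemma level_pwd : ∀ n, PWD (level σ D n) := by
  intro n
  induction n with
  | zero => exact maxD_pwd σ D _
  | succ n ih =>
    intro μ hμ μ' hμ' hne
    rcases level_parent σ D hμ with ⟨ν, hν, hμν⟩
    rcases level_parent σ D hμ' with ⟨ν', hν', hμ'ν'⟩
    by_cases hνν' : ν = ν'
    · subst hνν'
      exact maxD_pwd σ D ν hμν hμ'ν' hne
    · have h1 : μ.1 ⊆ ν.1 := (maxD_sub σ D ν hμν).2.1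
      have h2 : μ'.1 ⊆ ν'.1 := (maxD_sub σ D ν' hμ'ν').2.1
      have h3 : ν.1 ∩ ν'.1 = ∅ := ih hν hν' hνν'
      rw [← subset_empty_iff, ← h3]
      exact fun z hz => ⟨h1 hz.1, h2 hz.2⟩

include hσ1 hDo hDd hZ in
lemma openLevel_dense : ∀ n, Dense (openLevel σ D n) := by
  intro n
  induction n with
  | zero =>
    rw [dense_iff_inter_open]
    intro O hO hOne
    rcases maxD_dense σ D hσ1 hDo hDd (univ, []) (root_valid σ D hZ) O hO
      (by simpa using hOne) with ⟨μ, hμ, hne⟩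
    rcases hne with ⟨z, hzO, hz⟩
    exact ⟨z, hzO, mem_iUnion₂.2 ⟨μ, hμ, hz⟩⟩
  | succ n ih =>
    rw [dense_iff_inter_open]
    intro O hO hOne
    rcases (dense_iff_inter_open.1 ih) O hO hOne with ⟨z, hzO, hzL⟩
    rcases mem_iUnion₂.1 hzL with ⟨ν, hν, hzν⟩
    rcases maxD_dense σ D hσ1 hDo hDd ν (level_valid σ D hZ n ν hν) O hO
      ⟨z, hzO, hzν⟩ with ⟨μ, hμ, hne⟩
    rcases hne with ⟨w, hwO, hw⟩
    exact ⟨w, hwO, mem_iUnion₂.2 ⟨μ, mem_iUnion₂.2 ⟨ν, hν, hμ⟩, hw⟩⟩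

include hZ in
lemma level_unique {n : ℕ} {x : Z} {μ μ'} (hμ : μ ∈ level σ D n)
    (hμ' : μ' ∈ level σ D n) (hx : x ∈ μ.1) (hx' : x ∈ μ'.1) : μ = μ' := by
  by_contra hne
  have := level_pwd σ D hZ n hμ hμ' hne
  exact absurd (this ▸ (⟨hx, hx'⟩ : x ∈ μ.1 ∩ μ'.1)) (notMem_empty x)

variable (hσ2 : ∀ B : ℕ → Set (Set Y),
    (∀ n, IIMove Y (σ ((List.range n).map B)) (B n)) →
    ∀ k, Dense (⋃ (n : ℕ) (_ : k ≤ n), ⋃₀ B n))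

include hσ1 hσ2 hDo hDd hZ in
lemma dense_slice (x : Z) (hx : ∀ n, x ∈ openLevel σ D n) :
    Dense {z : Hyper Y | (x, z) ∈ D} := by
  -- extract the branch through x
  have hnode : ∀ n, ∃ μ, μ ∈ level σ D n ∧ x ∈ μ.1 := by
    intro n
    rcases mem_iUnion₂.1 (hx n) with ⟨μ, hμ, h⟩
    exact ⟨μ, hμ, h⟩
  choose nd hnd1 hnd2 using hnode
  have hvalidn : ∀ n, Valid σ D (nd n) := fun n => level_valid σ D hZ n (nd n) (hnd1 n)
  have hchild : ∀ n, nd (n + 1) ∈ childrenOf σ D (nd n) := by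
    intro n
    rcases level_parent σ D (hnd1 (n + 1)) with ⟨ν, hν, hmax⟩
    have hch := maxD_sub σ D ν hmax
    have hxν : x ∈ ν.1 := hch.2.1 (hnd2 (n + 1))
    have := level_unique σ D hZ (hnd1 n) hν (hnd2 n) hxν
    rw [this]
    exact hch
  set hist : ℕ → List (Step Y) := fun n => (nd n).2 with histdef
  have hhist : ∀ n, ∃ β, hist (n + 1) = β :: hist n := fun n => (hchild n).2.2
  have hlen : ∀ n, (hist n).length = n + 1 := by
    intro n
    induction n with
    | zero =>
      rcases (maxD_sub σ D ((univ : Set Z), ([] : List (Step Y))) (hnd1 0)).2.2 with ⟨β, hβ⟩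
      simp [histdef, hβ]
    | succ n ih =>
      rcases hhist n with ⟨β, hβ⟩
      simp [hβ, ih]
  set Sn : ℕ → Set (Set Y) := fun n => stock σ (hist n) with Sndef
  have hSle : ∀ n, Sn n ⊆ Sn (n + 1) := by
    intro n
    rcases hhist n with ⟨β, hβ⟩
    simp only [Sndef, hβ]
    exact stock_mono σ
  have hSmono : ∀ m n, m ≤ n → Sn m ⊆ Sn n := by
    intro m n hmn
    induction n, hmn using Nat.le_induction with
    | base => exact Subset.rfl
    | succ n hmn ih => exact ih.trans (hSle n)
  set P : Set (Set Y) := ⋃ n, Sn n with Pdef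
  have hP1 : ∀ U ∈ P, IsOpen U ∧ U.Nonempty := by
    intro U hU
    rcases mem_iUnion.1 hU with ⟨n, hUn⟩
    exact stock_good σ hσ1 (hist n) (hvalidn n).2.2.1 U hUn
  have hfin : ∀ A : Set (Set Y), A.Finite → A ⊆ P → ∃ n, A ⊆ Sn n := by
    intro A hA
    refine Set.Finite.induction_on (motive := fun A _ => A ⊆ P → ∃ n, A ⊆ Sn n) A hA
      (fun _ => ⟨0, empty_subset _⟩) ?_
    intro a s _ _ ih hins
    rcases ih ((subset_insert a s).trans hins) with ⟨n, hn⟩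
    rcases mem_iUnion.1 (hins (mem_insert a s)) with ⟨m, hm⟩
    refine ⟨max n m, insert_subset (hSmono m _ (le_max_right n m) hm)
      (hn.trans (hSmono n _ (le_max_left n m)))⟩
  have hlistbound : ∀ l : List (Set (Set Y)), (∀ A ∈ l, A ⊆ P ∧ A.Finite) →
      ∃ n, ∀ A ∈ l, A ⊆ Sn n := by
    intro l
    induction l with
    | nil => exact fun _ => ⟨0, by simp⟩
    | cons A l ih =>
      intro hl
      rcases ih (fun B hB => hl B (by simp [hB])) with ⟨n, hn⟩
      rcases hfin A (hl A (by simp)).2 (hl A (by simp)).1 with ⟨m, hm⟩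
      refine ⟨max m n, ?_⟩
      intro B hB
      rcases List.mem_cons.1 hB with rfl | hB
      · exact hm.trans (hSmono m _ (le_max_left m n))
      · exact (hn B hB).trans (hSmono n _ (le_max_right m n))
  have hP2 : ∀ l : List (Set (Set Y)), (∀ A ∈ l, A ⊆ P ∧ A.Finite) → σ l ⊆ P := by
    intro l hl
    rcases hlistbound l hl with ⟨n, hn⟩
    set m := max n l.length with hm
    have hlm : l ∈ hists (Sn m) ((hist m).length + 1) := by
      constructor
      · have := hlen m
        have h2 : l.length ≤ m := le_max_right n l.length
        omega
      · exact fun A hA => ⟨(hn A hA).trans (hSmono n m (le_max_left n l.length)),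
          (hl A hA).2⟩
    have hsub : σ l ⊆ sHull σ (Sn m) ((hist m).length + 1) :=
      fun U hU => mem_iUnion₂.2 ⟨l, hlm, hU⟩
    rcases hhist m with ⟨β, hβ⟩
    have : sHull σ (Sn m) ((hist m).length + 1) ⊆ Sn (m + 1) := by
      simp only [Sndef, hβ]
      exact fun U hU => Or.inr hU
    exact fun U hU => mem_iUnion.2 ⟨m + 1, this (hsub hU)⟩
  -- now prove density of the slice
  rw [dense_iff_inter_open]
  intro O hO hOne
  rcases hOne with ⟨A₀, hA₀⟩
  rcases isBasis.exists_subset_of_mem_open hA₀ hO with ⟨t, ⟨G, hGne, hGo, rfl⟩, hA₀G, hGsub⟩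
  have hGnonempty : ∀ e ∈ G, e.Nonempty := by
    intro e he
    rcases hA₀G.2 e he with ⟨a, ha⟩
    exact ⟨a, ha.2⟩
  have hkey : ∀ e : Set Y, ∃ W, e ∈ G → (W ∈ P ∧ ∀ U ∈ P, U ⊆ W → (U ∩ e).Nonempty) := by
    intro e
    by_cases he : e ∈ G
    · rcases key σ hσ1 hσ2 P hP1 hP2 e (hGo e he) (hGnonempty e he) with ⟨W, hW, hprop⟩
      exact ⟨W, fun _ => ⟨hW, hprop⟩⟩
    · exact ⟨∅, fun h => absurd h he⟩
  choose w hwspec using hkey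
  have hwP : ∀ e ∈ G, w e ∈ P := fun e he => (hwspec e he).1
  have hTfin : (w '' {e | e ∈ G}).Finite := (List.finite_toSet G).image w
  have hTP : w '' {e | e ∈ G} ⊆ P := by
    rintro W ⟨e, he, rfl⟩
    exact hwP e he
  rcases hfin _ hTfin hTP with ⟨m₀, hm₀⟩
  set m := max m₀ G.length with hmdef
  have hprobe : G.map w ∈ Probes σ (hist m) := by
    refine ⟨by simpa using hGne, ?_, ?_⟩
    · simp only [List.length_map]
      have := hlen m
      have h2 : G.length ≤ m := le_max_right m₀ G.length
      omega
    · intro e' he'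
      rcases List.mem_map.1 he' with ⟨e, he, rfl⟩
      exact hSmono m₀ m (le_max_left m₀ G.length) (hm₀ ⟨e, he, rfl⟩)
  rcases hhist m with ⟨β, hβ⟩
  have hvh : ValidHist σ (β :: hist m) := by
    have := (hvalidn (m + 1)).2.2.1
    rwa [show (nd (m+1)).2 = β :: hist m from hβ] at this
  obtain ⟨η, hη⟩ := hvh.2.1 (G.map w) hprobe
  have hstruct : EntryStruct (G.map w) η := hvh.2.2 (G.map w, η) hη
  have hDbox : (nd (m + 1)).1 ×ˢ vietorisBasic η ⊆ D := by
    have hdok := (hvalidn (m + 1)).2.2.2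
    rw [show (nd (m+1)).2 = β :: hist m from hβ] at hdok
    exact hdok β List.mem_cons_self (G.map w, η) hη
  have hηP : ∀ U ∈ η, U ∈ P := by
    intro U hU
    have : U ∈ entriesOf β := ⟨(G.map w, η), hη, hU⟩
    have : U ∈ Sn (m + 1) := by
      simp only [Sndef, hβ]
      exact Or.inl (Or.inr this)
    exact mem_iUnion.2 ⟨m + 1, this⟩
  have hηG : ∀ U ∈ η, ∃ e ∈ G, U ⊆ w e := by
    intro U hU
    rcases (hstruct.1 U hU).2.2 with ⟨e', he', hsub⟩
    rcases List.mem_map.1 he' with ⟨e, he, rfl⟩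
    exact ⟨e, he, hsub⟩
  have hGη : ∀ e ∈ G, ∃ U ∈ η, U ⊆ w e := by
    intro e he
    exact hstruct.2 (w e) (List.mem_map.2 ⟨e, he, rfl⟩)
  -- choose points
  rcases List.exists_mem_of_ne_nil G hGne with ⟨e₀, he₀⟩
  rcases hGnonempty e₀ he₀ with ⟨y₀, -⟩
  have h1 : ∀ U : Set Y, ∃ a : Y, U ∈ η → (a ∈ U ∧ ∃ e ∈ G, a ∈ e) := by
    intro U
    by_cases hU : U ∈ η
    · rcases hηG U hU with ⟨e, he, hsub⟩
      rcases (hwspec e he).2 U (hηP U hU) hsub with ⟨a, haU, hae⟩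
      exact ⟨a, fun _ => ⟨haU, e, he, hae⟩⟩
    · exact ⟨y₀, fun h => absurd h hU⟩
  have h2 : ∀ e : Set Y, ∃ a : Y, e ∈ G → (a ∈ e ∧ ∃ U ∈ η, a ∈ U) := by
    intro e
    by_cases he : e ∈ G
    · rcases hGη e he with ⟨U, hU, hsub⟩
      rcases (hwspec e he).2 U (hηP U hU) hsub with ⟨a, haU, hae⟩
      exact ⟨a, fun _ => ⟨hae, U, hU, haU⟩⟩
    · exact ⟨y₀, fun h => absurd h he⟩
  choose f hf using h1
  choose g hg using h2
  have hηne : η ≠ [] := by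
    rcases hGη e₀ he₀ with ⟨U, hU, -⟩
    exact List.ne_nil_of_mem hU
  set A' : Set Y := f '' {U | U ∈ η} ∪ g '' {e | e ∈ G} with hA'def
  have hA'fin : A'.Finite :=
    ((List.finite_toSet η).image f).union ((List.finite_toSet G).image g)
  have hA'ne : A'.Nonempty := by
    rcases List.exists_mem_of_ne_nil η hηne with ⟨U, hU⟩
    exact ⟨f U, Or.inl ⟨U, hU, rfl⟩⟩
  have hA'η : (⟨A', hA'fin.isClosed, hA'ne⟩ : Hyper Y) ∈ vietorisBasic η := by
    constructor
    · rintro a (⟨U, hU, rfl⟩ | ⟨e, he, rfl⟩)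
      · exact ⟨U, hU, (hf U hU).1⟩
      · rcases (hg e he).2 with ⟨U, hU, haU⟩
        exact ⟨U, hU, haU⟩
    · intro U hU
      exact ⟨f U, Or.inl ⟨U, hU, rfl⟩, (hf U hU).1⟩
  have hA'G : (⟨A', hA'fin.isClosed, hA'ne⟩ : Hyper Y) ∈ vietorisBasic G := by
    constructor
    · rintro a (⟨U, hU, rfl⟩ | ⟨e, he, rfl⟩)
      · rcases (hf U hU).2 with ⟨e, he, hae⟩
        exact ⟨e, he, hae⟩
      · exact ⟨e, he, (hg e he).1⟩
    · intro e he
      exact ⟨g e, Or.inr ⟨e, he, rfl⟩, (hg e he).1⟩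
  refine ⟨⟨A', hA'fin.isClosed, hA'ne⟩, hGsub hA'G, ?_⟩
  exact hDbox ⟨hnd2 (m + 1), hA'η⟩

include hσ1 hσ2 hDo hDd hZ in
lemma slice_meager :
    IsMeagre {x : Z | ¬ Dense {z : Hyper Y | (x, z) ∈ D}} := by
  have hsub : {x : Z | ¬ Dense {z : Hyper Y | (x, z) ∈ D}} ⊆ (⋂ n, openLevel σ D n)ᶜ := by
    intro x hxM hxI
    exact hxM (dense_slice σ D hσ1 hDo hDd hZ hσ2 x (fun n => mem_iInter.1 hxI n))
  have hres : (⋂ n, openLevel σ D n) ∈ residual Z := by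
    rw [countable_iInter_mem]
    intro n
    apply residual_of_dense_open
    · apply isOpen_biUnion
      intro μ hμ
      exact (level_valid σ D hZ n μ hμ).1
    · exact openLevel_dense σ D hσ1 hDo hDd hZ n
  exact Filter.mem_of_superset hres (fun z hz => by
    by_contra hzc
    exact (hsub (by simpa using hzc)) hz)

end Main
end HUK

universe u

/-- If a compact Hausdorff space `Y` is I-favorable, then the hyperspace
`exp Y` with the Vietoris topology is universally Kuratowski-Ulam*. -/
theorem hyper_uKUstar (Y : Type*) [TopologicalSpace Y] [CompactSpace Y]
    [T2Space Y] (hY : IFavorable Y) :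
    ∀ (Z : Type u) [TopologicalSpace Z] (E : Set (Z × Hyper Y)),
      IsNowhereDense E →
        IsMeagre {x : Z | ¬ IsNowhereDense {z : Hyper Y | (x, z) ∈ E}} := by

  intro Z _ E hE
  obtain ⟨σ, hσ1, hσ2⟩ := hY
  rcases eq_empty_or_nonempty (univ : Set Z) with hZ | hZ
  · have : {x : Z | ¬ IsNowhereDense {z : Hyper Y | (x, z) ∈ E}} = ∅ := by
      apply eq_empty_of_subset_empty
      rw [← hZ]
      exact subset_univ _
    rw [this]
    exact Filter.mem_of_superset Filter.univ_mem (by simp)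
  · set D : Set (Z × Hyper Y) := (closure E)ᶜ with hD
    have hDo : IsOpen D := isClosed_closure.isOpen_compl
    have hDd : Dense D := interior_eq_empty_iff_dense_compl.1 hE
    have hmeag := HUK.slice_meager σ D hσ1 hDo hDd hZ hσ2
    apply hmeag.mono
    intro x hx
    simp only [mem_setOf_eq] at hx ⊢
    intro hdense
    apply hx
    -- Dense D_x → IsNowhereDense E_x
    have hFx : IsClosed {z : Hyper Y | (x, z) ∈ closure E} :=
      (isClosed_closure).preimage (Continuous.prodMk_right x)
    have hsub : closure {z : Hyper Y | (x, z) ∈ E} ⊆ {z : Hyper Y | (x, z) ∈ closure E} :=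
      closure_minimal (fun z hz => subset_closure hz) hFx
    have hcompl : {z : Hyper Y | (x, z) ∈ closure E} = {z : Hyper Y | (x, z) ∈ D}ᶜ := by
      ext z
      simp [hD]
    have hint : interior {z : Hyper Y | (x, z) ∈ closure E} = ∅ := by
      rw [hcompl, interior_compl, hdense.closure_eq, compl_univ]
    unfold IsNowhereDense
    apply eq_empty_of_subset_empty
    rw [← hint]
    exact interior_mono hsub
end

section
/- For any cardinal λ, the hyperspace exp(D^λ) of the Cantor cube with the Vietoris topology is universally Kuratowski-Ulam*: for every topological space X and every nowhere dense E ⊆ X × exp(D^λ), the set {x ∈ X : E_x is not nowhere dense in exp(D^λ)} is meager in X. -/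
open Set TopologicalSpace

variable (X : Type*) [TopologicalSpace X]

universe u

universe v

section Part1

variable {Y : Type v} [TopologicalSpace Y] {Z : Type u} [TopologicalSpace Z]

/-- rectangle avoiding a nowhere dense set -/
lemma rect_avoid {E : Set (Z × Y)} (hE : IsNowhereDense E)
    {W : Set Z} {U : Set Y} (hW : IsOpen W) (hWne : W.Nonempty)
    (hU : IsOpen U) (hUne : U.Nonempty) :
    ∃ W' V, IsOpen W' ∧ W'.Nonempty ∧ IsOpen V ∧ V.Nonempty ∧ W' ⊆ W ∧ V ⊆ U ∧
      ∀ z ∈ W', ∀ y ∈ V, (z, y) ∉ E := by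
  have hprod : IsOpen (W ×ˢ U) := hW.prod hU
  have hne : (W ×ˢ U).Nonempty := hWne.prod hUne
  have hnotsub : ¬ (W ×ˢ U ⊆ closure E) := by
    intro hsub
    have : W ×ˢ U ⊆ interior (closure E) := hprod.subset_interior_iff.mpr hsub
    rw [hE] at this
    exact hne.not_subset_empty this
  obtain ⟨p, hpWU, hpcl⟩ := not_subset.mp hnotsub
  have hs : IsOpen ((W ×ˢ U) ∩ (closure E)ᶜ) := hprod.inter (isClosed_closure.isOpen_compl)
  obtain ⟨u, v, hu, hv, hau, hbv, huv⟩ :=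
    (isOpen_prod_iff.mp hs) p.1 p.2 (by exact ⟨hpWU, hpcl⟩)
  refine ⟨u, v, hu, ⟨p.1, hau⟩, hv, ⟨p.2, hbv⟩, ?_, ?_, ?_⟩
  · intro z hz
    exact ((huv (mk_mem_prod hz hbv)).1).1
  · intro y hy
    exact ((huv (mk_mem_prod hau hy)).1).2
  · intro z hz y hy hmem
    exact (huv (mk_mem_prod hz hy)).2 (subset_closure hmem)

/-- extend: given Player I's finite move, find a shrunken open W' and a valid response
all of whose members avoid E over W'. -/
lemma ext_move {E : Set (Z × Y)} (hE : IsNowhereDense E)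
    {A : Set (Set Y)} (hA : IMove Y A) :
    ∀ W : Set Z, IsOpen W → W.Nonempty →
    ∃ W' B, IsOpen W' ∧ W'.Nonempty ∧ W' ⊆ W ∧ IIMove Y A B ∧
      ∀ V ∈ B, ∀ z ∈ W', ∀ y ∈ V, (z, y) ∉ E := by
  obtain ⟨hfin, hop⟩ := hA
  revert hop
  refine Set.Finite.induction_on A hfin ?_ ?_
  · intro _ W hW hWne
    exact ⟨W, ∅, hW, hWne, subset_rfl, ⟨⟨finite_empty, by simp⟩, by simp⟩, by simp⟩
  · intro a s ha hs IH hop W hW hWne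
    have hopa : IsOpen a ∧ a.Nonempty := hop a (mem_insert _ _)
    have hops : ∀ U ∈ s, IsOpen U ∧ U.Nonempty := fun U hU => hop U (mem_insert_of_mem _ hU)
    obtain ⟨W₁, B₁, hW₁, hW₁ne, hW₁sub, hB₁, hfree₁⟩ := IH hops W hW hWne
    obtain ⟨W', V, hW', hW'ne, hV, hVne, hW'sub, hVsub, hfree⟩ :=
      rect_avoid hE hW₁ hW₁ne hopa.1 hopa.2
    refine ⟨W', insert V B₁, hW', hW'ne, hW'sub.trans hW₁sub, ⟨⟨hB₁.1.1.insert V, ?_⟩, ?_⟩, ?_⟩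
    · rintro U (rfl | hU)
      · exact ⟨hV, hVne⟩
      · exact hB₁.1.2 U hU
    · rintro U (rfl | hU)
      · exact ⟨V, mem_insert _ _, hVsub⟩
      · obtain ⟨V', hV', hsub⟩ := hB₁.2 U hU
        exact ⟨V', mem_insert_of_mem _ hV', hsub⟩
    · rintro V' (rfl | hV') z hz y hy
      · exact hfree z hz y hy
      · exact hfree₁ V' hV' z (hW'sub hz) y hy

variable (σ : List (Set (Set Y)) → Set (Set Y)) (E : Set (Z × Y))

/-- A good node of the tree: an open nonempty `W ⊆ Z` together with a finite
history of Player II moves, valid against `σ` and all avoiding `E` over `W`. -/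
def GoodNode (t : Set Z × List (Set (Set Y))) : Prop :=
  IsOpen t.1 ∧ t.1.Nonempty ∧ ∀ n : ℕ, n < t.2.length →
    IIMove Y (σ (t.2.take n)) (t.2.getD n ∅) ∧
    ∀ V ∈ t.2.getD n ∅, ∀ z ∈ t.1, ∀ y ∈ V, (z, y) ∉ E

def ChildSet (s : Set Z × List (Set (Set Y))) : Set (Set Z × List (Set (Set Y))) :=
  {u | GoodNode σ E u ∧ u.1 ⊆ s.1 ∧ ∃ B, u.2 = s.2 ++ [B]}

def Fam (s : Set Z × List (Set (Set Y))) :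
    Set (Set (Set Z × List (Set (Set Y)))) :=
  {F | F ⊆ ChildSet σ E s ∧ ∀ u ∈ F, ∀ v ∈ F, u ≠ v → u.1 ∩ v.1 = ∅}

lemma fam_maximal (s : Set Z × List (Set (Set Y))) :
    ∃ M, Maximal (· ∈ Fam σ E s) M := by
  apply zorn_subset
  intro c hc hchain
  refine ⟨⋃₀ c, ⟨?_, ?_⟩, fun s hs => subset_sUnion_of_mem hs⟩
  · exact sUnion_subset fun F hF => (hc hF).1
  · rintro u ⟨F, hF, huF⟩ v ⟨G, hG, hvG⟩ hne
    rcases hchain.total hF hG with h | h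
    · exact (hc hG).2 u (h huF) v hvG hne
    · exact (hc hF).2 u huF v (h hvG) hne

noncomputable def maxFam (s : Set Z × List (Set (Set Y))) :
    Set (Set Z × List (Set (Set Y))) :=
  Classical.choose (fam_maximal σ E s)

lemma maxFam_spec (s : Set Z × List (Set (Set Y))) :
    Maximal (· ∈ Fam σ E s) (maxFam σ E s) :=
  Classical.choose_spec (fam_maximal σ E s)

noncomputable def Lev : ℕ → Set (Set Z × List (Set (Set Y)))
  | 0 => {(Set.univ, [])}
  | n + 1 => ⋃ s ∈ Lev n, maxFam σ E s

/-- any good node has a good child inside any prescribed open subset -/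
lemma child_exists (hE : IsNowhereDense E) (hσI : ∀ h, IMove Y (σ h))
    {s : Set Z × List (Set (Set Y))} (hs : GoodNode σ E s)
    {W₂ : Set Z} (hW₂ : IsOpen W₂) (hne : W₂.Nonempty) (hsub : W₂ ⊆ s.1) :
    ∃ u ∈ ChildSet σ E s, u.1 ⊆ W₂ := by
  obtain ⟨W', B, hW', hW'ne, hW'sub, hBmove, hfree⟩ :=
    ext_move hE (hσI s.2) W₂ hW₂ hne
  refine ⟨(W', s.2 ++ [B]), ⟨⟨hW', hW'ne, ?_⟩, hW'sub.trans hsub, B, rfl⟩, hW'sub⟩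
  intro n hn
  simp only [List.length_append, List.length_singleton] at hn
  rcases Nat.lt_succ_iff_lt_or_eq.mp hn with h | h
  · have htake : (s.2 ++ [B]).take n = s.2.take n :=
      List.take_append_of_le_length (le_of_lt h)
    have hget : (s.2 ++ [B]).getD n ∅ = s.2.getD n ∅ := by
      simp [List.getD_eq_getElem?_getD, List.getElem?_append_left h]
    show IIMove Y (σ ((s.2 ++ [B]).take n)) ((s.2 ++ [B]).getD n ∅) ∧ _
    rw [htake, hget]
    exact ⟨(hs.2.2 n h).1,
      fun V hV z hz y hy => (hs.2.2 n h).2 V hV z (hW'sub.trans hsub hz) y hy⟩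
  · subst h
    have htake : (s.2 ++ [B]).take s.2.length = s.2 := List.take_left
    have hget : (s.2 ++ [B]).getD s.2.length ∅ = B := by
      simp [List.getD_eq_getElem?_getD, List.getElem?_concat_length]
    show IIMove Y (σ ((s.2 ++ [B]).take s.2.length)) ((s.2 ++ [B]).getD s.2.length ∅) ∧ _
    rw [htake, hget]
    exact ⟨hBmove, hfree⟩

lemma maxFam_dense (hE : IsNowhereDense E) (hσI : ∀ h, IMove Y (σ h))
    {s : Set Z × List (Set (Set Y))} (hs : GoodNode σ E s) :
    s.1 ⊆ closure (⋃ u ∈ maxFam σ E s, u.1) := by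
  intro x hx
  by_contra hxcl
  set C := ⋃ u ∈ maxFam σ E s, u.1 with hC
  have hW₂ : IsOpen (s.1 ∩ (closure C)ᶜ) := hs.1.inter isClosed_closure.isOpen_compl
  have hW₂ne : (s.1 ∩ (closure C)ᶜ).Nonempty := ⟨x, hx, hxcl⟩
  obtain ⟨u, hu, husub⟩ := child_exists σ E hE hσI hs hW₂ hW₂ne inter_subset_left
  have huC : u.1 ⊆ (closure C)ᶜ := fun z hz => (husub hz).2
  have spec := maxFam_spec σ E s
  have hunotin : u ∉ maxFam σ E s := by
    intro huM
    have h1 : u.1 ⊆ C := subset_biUnion_of_mem huM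
    obtain ⟨z, hz⟩ := hu.1.2.1
    exact huC hz (subset_closure (h1 hz))
  have hins : insert u (maxFam σ E s) ∈ Fam σ E s := by
    constructor
    · rintro v (rfl | hv)
      · exact hu
      · exact spec.1.1 hv
    · rintro v (rfl | hv) w (rfl | hw) hne
      · exact absurd rfl hne
      · exact eq_empty_of_subset_empty fun z hz =>
          huC hz.1 (subset_closure (subset_biUnion_of_mem hw hz.2))
      · exact eq_empty_of_subset_empty fun z hz =>
          huC hz.2 (subset_closure (subset_biUnion_of_mem hv hz.1))
      · exact spec.1.2 v hv w hw hne
  exact hunotin (spec.2 hins (subset_insert _ _) (mem_insert _ _))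

lemma ifavorable_uKUstar {Y : Type v} [TopologicalSpace Y] (hY : IFavorable Y)
    (Z : Type u) [TopologicalSpace Z] (E : Set (Z × Y)) (hE : IsNowhereDense E) :
    IsMeagre {x : Z | ¬ IsNowhereDense {z : Y | (x, z) ∈ E}} := by
  obtain ⟨σ, hσI, hσwin⟩ := hY
  by_cases hZ : Nonempty Z
  swap
  · have : IsEmpty Z := not_nonempty_iff.mp hZ
    have h0 : {x : Z | ¬ IsNowhereDense {z : Y | (x, z) ∈ E}} = ∅ :=
      Set.eq_empty_of_isEmpty _
    rw [h0]; exact IsMeagre.empty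
  have hLev0 : Lev σ E 0 = ({((Set.univ : Set Z), ([] : List (Set (Set Y))))} :
      Set (Set Z × List (Set (Set Y)))) := rfl
  have hLevS : ∀ n, Lev σ E (n+1) = ⋃ s ∈ Lev σ E n, maxFam σ E s := fun n => rfl
  have hLev : ∀ n, (∀ t ∈ Lev σ E n, GoodNode σ E t ∧ t.2.length = n) ∧
      (∀ t ∈ Lev σ E n, ∀ u ∈ Lev σ E n, t ≠ u → t.1 ∩ u.1 = ∅) := by
    intro n
    induction n with
    | zero =>
      constructor
      · intro t ht
        rw [hLev0, mem_singleton_iff] at ht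
        subst ht
        exact ⟨⟨isOpen_univ, univ_nonempty, fun n hn => absurd hn (by simp)⟩, rfl⟩
      · intro t ht u hu hne
        rw [hLev0, mem_singleton_iff] at ht hu
        exact absurd (ht.trans hu.symm) hne
    | succ n IH =>
      constructor
      · intro t ht
        rw [hLevS, mem_iUnion₂] at ht
        obtain ⟨p, hp, htp⟩ := ht
        obtain ⟨hgood, -, B, hB⟩ := (maxFam_spec σ E p).1.1 htp
        refine ⟨hgood, ?_⟩
        rw [hB]
        simp [((IH.1 p hp).2)]
      · intro t ht u hu hne
        rw [hLevS, mem_iUnion₂] at ht hu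
        obtain ⟨p, hp, htp⟩ := ht
        obtain ⟨q, hq, huq⟩ := hu
        by_cases hpq : p = q
        · subst hpq
          exact (maxFam_spec σ E p).1.2 t htp u huq hne
        · have htsub : t.1 ⊆ p.1 := ((maxFam_spec σ E p).1.1 htp).2.1
          have husub : u.1 ⊆ q.1 := ((maxFam_spec σ E q).1.1 huq).2.1
          have := IH.2 p hp q hq hpq
          exact eq_empty_of_subset_empty fun z hz =>
            (this ▸ (mem_inter (htsub hz.1) (husub hz.2)) : z ∈ (∅ : Set Z))
  have hparent : ∀ n u, u ∈ Lev σ E (n+1) →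
      ∃ s ∈ Lev σ E n, u.1 ⊆ s.1 ∧ ∃ B, u.2 = s.2 ++ [B] := by
    intro n u hu
    rw [hLevS, mem_iUnion₂] at hu
    obtain ⟨p, hp, hup⟩ := hu
    obtain ⟨-, hsub, hB⟩ := (maxFam_spec σ E p).1.1 hup
    exact ⟨p, hp, hsub, hB⟩
  have hGopen : ∀ n, IsOpen (⋃ t ∈ Lev σ E n, t.1) :=
    fun n => isOpen_biUnion fun t ht => ((hLev n).1 t ht).1.1
  have hGdense : ∀ n, Dense (⋃ t ∈ Lev σ E n, t.1) := by
    intro n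
    induction n with
    | zero =>
      rw [hLev0]
      simp
    | succ n IH =>
      have hsub : (⋃ t ∈ Lev σ E n, t.1) ⊆ closure (⋃ t ∈ Lev σ E (n+1), t.1) := by
        intro x hx
        rw [mem_iUnion₂] at hx
        obtain ⟨p, hp, hxp⟩ := hx
        have := maxFam_dense σ E hE hσI ((hLev n).1 p hp).1 hxp
        refine closure_mono ?_ this
        intro z hz
        rw [mem_iUnion₂] at hz ⊢
        obtain ⟨u, hu, hzu⟩ := hz
        exact ⟨u, by rw [hLevS, mem_iUnion₂]; exact ⟨p, hp, hu⟩, hzu⟩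
      intro x
      have := closure_mono hsub (IH x)
      rwa [closure_closure] at this
  rw [isMeagre_iff_countable_union_isNowhereDense]
  refine ⟨Set.range (fun n => (⋃ t ∈ Lev σ E n, t.1)ᶜ), ?_, countable_range _, ?_⟩
  · rintro s ⟨n, rfl⟩
    rw [(hGopen n).isClosed_compl.isNowhereDense_iff, interior_compl,
      (hGdense n).closure_eq, compl_univ]
  · intro x hx
    by_contra hxU
    have hxG : ∀ n, ∃ t, t ∈ Lev σ E n ∧ x ∈ t.1 := by
      intro n
      by_contra h
      push_neg at h
      refine hxU ⟨_, ⟨n, rfl⟩, fun hmem => ?_⟩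
      rw [mem_iUnion₂] at hmem
      obtain ⟨t, ht, hxt⟩ := hmem
      exact h t ht hxt
    set t : ℕ → Set Z × List (Set (Set Y)) := fun n => Classical.choose (hxG n) with htdef
    have ht : ∀ n, (t n) ∈ Lev σ E n ∧ x ∈ (t n).1 := fun n => Classical.choose_spec (hxG n)
    have huniq : ∀ n s, s ∈ Lev σ E n → x ∈ s.1 → s = t n := by
      intro n s hs hxs
      by_contra hne
      have := (hLev n).2 s hs (t n) (ht n).1 hne
      exact (this ▸ (mem_inter hxs (ht n).2) : x ∈ (∅ : Set Z))
    have coh : ∀ n, ∃ B, (t (n+1)).2 = (t n).2 ++ [B] := by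
      intro n
      obtain ⟨s, hsLev, hsub, B, hB⟩ := hparent n (t (n+1)) (ht (n+1)).1
      have hseq : s = t n := huniq n s hsLev (hsub (ht (n+1)).2)
      exact ⟨B, by rw [← hseq]; exact hB⟩
    set Bx : ℕ → Set (Set Y) := fun n => Classical.choose (coh n) with hBxdef
    have hBx : ∀ n, (t (n+1)).2 = (t n).2 ++ [Bx n] := fun n => Classical.choose_spec (coh n)
    have hlist : ∀ n, (t n).2 = (List.range n).map Bx := by
      intro n
      induction n with
      | zero =>
        have h0 : t 0 ∈ Lev σ E 0 := (ht 0).1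
        rw [hLev0, mem_singleton_iff] at h0
        rw [h0]
        rfl
      | succ n IH =>
        rw [hBx n, IH, List.range_succ, List.map_append]
        rfl
    have hlen' : ∀ n, ((List.range n).map Bx).length = n := by simp
    have htake : ∀ n, (((List.range n).map Bx) ++ [Bx n]).take n = (List.range n).map Bx :=
      fun n => List.take_left' (hlen' n)
    have hget : ∀ n, (((List.range n).map Bx) ++ [Bx n]).getD n ∅ = Bx n := by
      intro n
      conv_lhs => rw [show n = ((List.range n).map Bx).length from (hlen' n).symm]
      simp [List.getD_eq_getElem?_getD, List.getElem?_concat_length]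
    have hat : ∀ n, IIMove Y (σ ((List.range n).map Bx)) (Bx n) ∧
        ∀ V ∈ Bx n, ∀ z ∈ (t (n+1)).1, ∀ y ∈ V, (z, y) ∉ E := by
      intro n
      have hgood := ((hLev (n+1)).1 (t (n+1)) (ht (n+1)).1).1
      have hlen : (t (n+1)).2.length = n + 1 := ((hLev (n+1)).1 _ (ht (n+1)).1).2
      have h := hgood.2.2 n (by omega)
      rw [hBx n, hlist n, htake n, hget n] at h
      exact h
    have hvalid : ∀ n, IIMove Y (σ ((List.range n).map Bx)) (Bx n) := fun n => (hat n).1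
    have hfree : ∀ n, ∀ V ∈ Bx n, ∀ y ∈ V, (x, y) ∉ E :=
      fun n V hV y hy => (hat n).2 V hV x (ht (n+1)).2 y hy
    have hdense := hσwin Bx hvalid 0
    have hne : (interior (closure {z : Y | (x, z) ∈ E})).Nonempty :=
      nonempty_iff_ne_empty.mpr hx
    obtain ⟨y, hyO, hyD⟩ := dense_iff_inter_open.mp hdense _ isOpen_interior hne
    simp only [mem_iUnion] at hyD
    obtain ⟨n, -, hyB⟩ := hyD
    obtain ⟨V, hV, hyV⟩ := hyB
    have hVopen : IsOpen V := ((hvalid n).1.2 V hV).1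
    have hycl : y ∈ closure {z : Y | (x, z) ∈ E} := interior_subset hyO
    obtain ⟨z, ⟨-, hzV⟩, hzE⟩ :=
      mem_closure_iff.mp hycl _ (isOpen_interior.inter hVopen) ⟨hyO, hyV⟩
    exact hfree n V hV z hzV hzE

end Part1

noncomputable section Part2
open scoped Classical

variable {lam : Type*}

/-- projection of the Cantor cube onto finitely many coordinates -/
def cproj (S : Finset lam) (x : lam → Bool) : lam → Bool :=
  fun i => if i ∈ S then x i else false

lemma cproj_proj {S' S : Finset lam} (h : S' ⊆ S) (x : lam → Bool) :
    cproj S' (cproj S x) = cproj S' x := by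
  funext i
  by_cases hi : i ∈ S'
  · simp [cproj, hi, h hi]
  · simp [cproj, hi]

lemma cproj_idem (S : Finset lam) (x : lam → Bool) :
    cproj S (cproj S x) = cproj S x := cproj_proj (subset_rfl) x

lemma cproj_continuous (S : Finset lam) : Continuous (cproj S) := by
  refine continuous_pi fun i => ?_
  by_cases h : i ∈ S
  · simpa [cproj, h] using continuous_apply i
  · simpa [cproj, h] using (continuous_const : Continuous fun _ : lam → Bool => false)

lemma cproj_fixed_mono {S S₀ : Finset lam} (h : S ⊆ S₀) {σ : lam → Bool}
    (hσ : cproj S σ = σ) : cproj S₀ σ = σ := by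
  funext i
  by_cases hi : i ∈ S₀
  · simp [cproj, hi]
  · have hiS : i ∉ S := fun hS => hi (h hS)
    have h2 : σ i = false := by rw [← hσ]; simp [cproj, hiS]
    simp [cproj, hi, h2]

lemma fixed_finite (S : Finset lam) : {f : lam → Bool | cproj S f = f}.Finite := by
  have : {f : lam → Bool | cproj S f = f} ⊆
      Set.range (fun g : S → Bool => fun i => if h : i ∈ S then g ⟨i, h⟩ else false) := by
    intro f hf
    refine ⟨fun j => f j.1, ?_⟩
    funext i
    by_cases h : i ∈ S
    · simp [h]
    · have h2 : f i = false := by rw [← hf]; simp [cproj, h]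
      simp [h, h2]
  exact (Set.finite_range _).subset this

lemma cyl_eq (S : Finset lam) (σ : lam → Bool) (hσ : cproj S σ = σ) :
    {x : lam → Bool | cproj S x = σ} = ⋂ i ∈ S, {x : lam → Bool | x i = σ i} := by
  ext x
  simp only [mem_setOf_eq, mem_iInter]
  constructor
  · intro h i hi
    rw [← h]
    simp [cproj, hi]
  · intro h
    funext i
    by_cases hi : i ∈ S
    · simp [cproj, hi, h i hi]
    · have h2 : σ i = false := by rw [← hσ]; simp [cproj, hi]
      simp [cproj, hi, h2]

lemma cyl_open (S : Finset lam) (σ : lam → Bool) (hσ : cproj S σ = σ) :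
    IsOpen {x : lam → Bool | cproj S x = σ} := by
  rw [cyl_eq S σ hσ]
  refine isOpen_biInter_finset fun i _ => ?_
  show IsOpen ((fun x : lam → Bool => x i) ⁻¹' {σ i})
  exact (isOpen_discrete _).preimage (continuous_apply i)

/-- `T` is a legitimate trace on coordinates `S`. -/
def GoodPair (S : Finset lam) (T : Set (lam → Bool)) : Prop :=
  T.Nonempty ∧ ∀ σ ∈ T, cproj S σ = σ

/-- the basic open subset of the hyperspace determined by a finite trace -/
def Hset (S : Finset lam) (T : Set (lam → Bool)) : Set (Hyper (lam → Bool)) :=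
  {A | cproj S '' A.1 = T}

lemma goodPair_finite {S : Finset lam} {T : Set (lam → Bool)} (h : GoodPair S T) :
    T.Finite := (fixed_finite S).subset fun σ hσ => h.2 σ hσ

/-- the canonical member of `Hset S T` -/
def AofPair {S : Finset lam} {T : Set (lam → Bool)} (h : GoodPair S T) :
    Hyper (lam → Bool) :=
  ⟨cproj S ⁻¹' T, ((goodPair_finite h).isClosed).preimage (cproj_continuous S),
    ⟨h.1.some, show cproj S h.1.some ∈ T from by
      rw [h.2 _ h.1.some_mem]; exact h.1.some_mem⟩⟩

lemma AofPair_mem {S : Finset lam} {T : Set (lam → Bool)} (h : GoodPair S T) :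
    AofPair h ∈ Hset S T := by
  show cproj S '' (cproj S ⁻¹' T) = T
  apply subset_antisymm
  · rintro σ ⟨x, hx, rfl⟩
    exact hx
  · intro σ hσ
    exact ⟨σ, show cproj S σ ∈ T from by rw [h.2 σ hσ]; exact hσ, h.2 σ hσ⟩

lemma Hset_nonempty {S : Finset lam} {T : Set (lam → Bool)} (h : GoodPair S T) :
    (Hset S T).Nonempty := ⟨AofPair h, AofPair_mem h⟩

lemma Hset_isOpen {S : Finset lam} {T : Set (lam → Bool)} (h : GoodPair S T) :
    IsOpen (Hset S T) := by
  have hTfin := goodPair_finite h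
  set L : List (Set (lam → Bool)) :=
    hTfin.toFinset.toList.map (fun σ => {x | cproj S x = σ}) with hL
  have hmemL : ∀ V, V ∈ L ↔ ∃ σ ∈ T, V = {x | cproj S x = σ} := by
    intro V
    simp only [hL, List.mem_map, Finset.mem_toList, Set.Finite.mem_toFinset]
    constructor
    · rintro ⟨σ, hσ, rfl⟩; exact ⟨σ, hσ, rfl⟩
    · rintro ⟨σ, hσ, rfl⟩; exact ⟨σ, hσ, rfl⟩
  have heq : Hset S T = vietorisBasic L := by
    ext A
    constructor
    · intro hA
      constructor
      · intro x hx
        refine ⟨{y | cproj S y = cproj S x}, ?_, rfl⟩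
        rw [mem_setOf_eq, hmemL]
        exact ⟨cproj S x, by rw [← hA]; exact ⟨x, hx, rfl⟩, rfl⟩
      · intro V hV
        obtain ⟨σ, hσ, rfl⟩ := (hmemL V).mp hV
        rw [← hA] at hσ
        obtain ⟨x, hx, hpx⟩ := hσ
        exact ⟨x, hx, hpx⟩
    · rintro ⟨h1, h2⟩
      apply subset_antisymm
      · rintro σ ⟨x, hx, rfl⟩
        obtain ⟨V, hV, hxV⟩ := h1 hx
        obtain ⟨σ', hσ', rfl⟩ := (hmemL V).mp hV
        rw [mem_setOf_eq] at hxV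
        rw [hxV]
        exact hσ'
      · intro σ hσ
        obtain ⟨x, hx, hxσ⟩ := h2 {y | cproj S y = σ} ((hmemL _).mpr ⟨σ, hσ, rfl⟩)
        exact ⟨x, hx, hxσ⟩
  rw [heq]
  apply TopologicalSpace.GenerateOpen.basic
  refine ⟨L, ?_, ?_, rfl⟩
  · intro h0
    obtain ⟨σ, hσ⟩ := h.1
    have : {x : lam → Bool | cproj S x = σ} ∈ L := (hmemL _).mpr ⟨σ, hσ, rfl⟩
    rw [h0] at this
    exact absurd this List.not_mem_nil
  · intro V hV
    obtain ⟨σ, hσ, rfl⟩ := (hmemL V).mp hV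
    exact cyl_open S σ (h.2 σ hσ)

lemma nbhd_finset {V : Set (lam → Bool)} (hV : IsOpen V) {x : lam → Bool} (hx : x ∈ V) :
    ∃ S : Finset lam, ∀ y, (∀ i ∈ S, y i = x i) → y ∈ V := by
  obtain ⟨I, u, hu, hsub⟩ := isOpen_pi_iff.mp hV x hx
  refine ⟨I, fun y hy => hsub fun i hi => ?_⟩
  rw [hy i hi]
  exact (hu i hi).2

lemma image_cproj_sub {S' S : Finset lam} (h : S' ⊆ S) (A : Set (lam → Bool)) :
    cproj S' '' (cproj S '' A) = cproj S' '' A := by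
  rw [← Set.image_comp]
  exact Set.image_congr' (fun x => cproj_proj h x)

lemma subset_foldr_union {β : Type*} (l : List β) (f : β → Finset lam) {b : β}
    (hb : b ∈ l) : f b ⊆ (l.map f).foldr (· ∪ ·) ∅ := by
  induction l with
  | nil => cases hb
  | cons c l IH =>
    rcases List.mem_cons.mp hb with rfl | hb'
    · exact (Finset.subset_union_left).trans (by rw [List.map_cons, List.foldr_cons])
    · exact ((IH hb').trans Finset.subset_union_right).trans
        (by rw [List.map_cons, List.foldr_cons])

lemma agree_open (S : Finset lam) (a : lam → Bool) :
    IsOpen {y : lam → Bool | ∀ i ∈ S, y i = a i} := by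
  have : {y : lam → Bool | ∀ i ∈ S, y i = a i} =
      ⋂ i ∈ S, {y : lam → Bool | y i = a i} := by
    ext y; simp
  rw [this]
  refine isOpen_biInter_finset fun i _ => ?_
  show IsOpen ((fun y : lam → Bool => y i) ⁻¹' {a i})
  exact (isOpen_discrete _).preimage (continuous_apply i)

lemma exists_Hset_subset {O : Set (Hyper (lam → Bool))} (hO : IsOpen O)
    {A : Hyper (lam → Bool)} (hA : A ∈ O) :
    ∃ S T, GoodPair S T ∧ A ∈ Hset S T ∧ Hset S T ⊆ O := by
  have key : ∀ O' : Set (Hyper (lam → Bool)),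
      TopologicalSpace.GenerateOpen
        {S | ∃ L : List (Set (lam → Bool)), L ≠ [] ∧ (∀ V ∈ L, IsOpen V) ∧
          S = vietorisBasic L} O' →
      A ∈ O' → ∃ S T, GoodPair S T ∧ A ∈ Hset S T ∧ Hset S T ⊆ O' := by
    intro O' hgen
    induction hgen with
    | basic U hU =>
      obtain ⟨L, hLne, hLop, rfl⟩ := hU
      intro hA
      obtain ⟨hAcov, hAmeet⟩ := hA
      have hcomp : IsCompact A.1 := A.2.1.isCompact
      have hpt : ∀ x : A.1, ∃ p : Finset lam × Set (lam → Bool),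
          p.2 ∈ L ∧ ∀ y, (∀ i ∈ p.1, y i = x.1 i) → y ∈ p.2 := by
        intro x
        obtain ⟨V, hVL, hxV⟩ := hAcov x.2
        obtain ⟨S, hS⟩ := nbhd_finset (hLop V hVL) hxV
        exact ⟨(S, V), hVL, hS⟩
      choose px hpxL hpx using hpt
      have hcov : A.1 ⊆ ⋃ x : A.1, {y | ∀ i ∈ (px x).1, y i = x.1 i} :=
        fun z hz => mem_iUnion.mpr ⟨⟨z, hz⟩, fun i _ => rfl⟩
      obtain ⟨tfin, htfin⟩ := hcomp.elim_finite_subcover _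
        (fun x : A.1 => agree_open (px x).1 x.1) hcov
      have hVpt : ∀ V, V ∈ L → ∃ p : (lam → Bool) × Finset lam,
          p.1 ∈ A.1 ∧ p.1 ∈ V ∧ ∀ y, (∀ i ∈ p.2, y i = p.1 i) → y ∈ V := by
        intro V hV
        obtain ⟨a, haA, haV⟩ := hAmeet V hV
        obtain ⟨S, hS⟩ := nbhd_finset (hLop V hV) haV
        exact ⟨(a, S), haA, haV, hS⟩
      choose pV hpVA hpVV hpVn using hVpt
      set S : Finset lam := tfin.sup (fun x => (px x).1) ∪
        (L.attach.map (fun q => (pV q.1 q.2).2)).foldr (· ∪ ·) ∅ with hSdef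
      have hSx : ∀ x ∈ tfin, (px x).1 ⊆ S := by
        intro x hx i hi
        have h1 : (px x).1 ⊆ tfin.sup (fun x => (px x).1) := Finset.le_sup (f := fun x => (px x).1) hx
        exact Finset.mem_union_left _ (h1 hi)
      have hSV : ∀ V (hV : V ∈ L), (pV V hV).2 ⊆ S := by
        intro V hV
        exact (subset_foldr_union L.attach (fun q => (pV q.1 q.2).2)
          (List.mem_attach L ⟨V, hV⟩)).trans Finset.subset_union_right
      refine ⟨S, cproj S '' A.1,
        ⟨(A.2.2).image _, by rintro σ ⟨x, hx, rfl⟩; exact cproj_idem S x⟩, rfl, ?_⟩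
      intro B hB
      constructor
      · intro b hb
        have hbT : cproj S b ∈ cproj S '' A.1 := by
          rw [show cproj S '' A.1 = cproj S '' B.1 from hB.symm]
          exact ⟨b, hb, rfl⟩
        obtain ⟨a, haA, hab⟩ := hbT
        have := htfin haA
        simp only [mem_iUnion] at this
        obtain ⟨x, hxt, hax⟩ := this
        refine ⟨(px x).2, hpxL x, hpx x b fun i hi => ?_⟩
        have hiS : i ∈ S := hSx x hxt hi
        have hba : b i = a i := by
          have := congrFun hab i
          simpa [cproj, hiS] using this.symm
        rw [hba]
        exact hax i hi
      · intro V hV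
        have : cproj S (pV V hV).1 ∈ cproj S '' B.1 := by
          rw [hB]
          exact ⟨_, hpVA V hV, rfl⟩
        obtain ⟨b, hbB, hba⟩ := this
        refine ⟨b, hbB, hpVn V hV b fun i hi => ?_⟩
        have hiS : i ∈ S := hSV V hV hi
        have := congrFun hba i
        simpa [cproj, hiS] using this
    | univ =>
      intro _
      refine ⟨∅, cproj ∅ '' A.1,
        ⟨(A.2.2).image _, by rintro σ ⟨x, hx, rfl⟩; exact cproj_idem ∅ x⟩, rfl,
        subset_univ _⟩
    | inter s t hs ht IHs IHt =>
      intro hA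
      obtain ⟨S₁, T₁, hG₁, hA₁, hsub₁⟩ := IHs hA.1
      obtain ⟨S₂, T₂, hG₂, hA₂, hsub₂⟩ := IHt hA.2
      refine ⟨S₁ ∪ S₂, cproj (S₁ ∪ S₂) '' A.1,
        ⟨(A.2.2).image _, by rintro σ ⟨x, hx, rfl⟩; exact cproj_idem _ x⟩, rfl, ?_⟩
      intro B hB
      have hkey : ∀ (S' : Finset lam) (T' : Set (lam → Bool)), S' ⊆ S₁ ∪ S₂ →
          A ∈ Hset S' T' → B ∈ Hset S' T' := by
        intro S' T' hsub hAmem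
        show cproj S' '' B.1 = T'
        calc cproj S' '' B.1 = cproj S' '' (cproj (S₁ ∪ S₂) '' B.1) :=
              (image_cproj_sub hsub B.1).symm
          _ = cproj S' '' (cproj (S₁ ∪ S₂) '' A.1) := by
              rw [show cproj (S₁ ∪ S₂) '' B.1 = cproj (S₁ ∪ S₂) '' A.1 from hB]
          _ = cproj S' '' A.1 := image_cproj_sub hsub A.1
          _ = T' := hAmem
      exact ⟨hsub₁ (hkey S₁ T₁ Finset.subset_union_left hA₁),
        hsub₂ (hkey S₂ T₂ Finset.subset_union_right hA₂)⟩
    | sUnion 𝒮 h𝒮 IH =>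
      intro hA
      obtain ⟨s, hs𝒮, hAs⟩ := hA
      obtain ⟨S, T, hG, hAmem, hsub⟩ := IH s hs𝒮 hAs
      exact ⟨S, T, hG, hAmem, hsub.trans (subset_sUnion_of_mem hs𝒮)⟩
  exact key O hO hA

/-- membership of `T_V` itself (as a set of points) in `Hset S_V T_V` -/
def TofPair {S : Finset lam} {T : Set (lam → Bool)} (h : GoodPair S T) :
    Hyper (lam → Bool) := ⟨T, (goodPair_finite h).isClosed, h.1⟩

lemma TofPair_mem {S : Finset lam} {T : Set (lam → Bool)} (h : GoodPair S T) :
    TofPair h ∈ Hset S T := by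
  show cproj S '' T = T
  apply subset_antisymm
  · rintro σ ⟨x, hx, rfl⟩
    rw [h.2 x hx]
    exact hx
  · intro σ hσ
    exact ⟨σ, hσ, h.2 σ hσ⟩

/-- An inclusion between basic trace sets forces coordinates and traces to match. -/
lemma Hset_subset_forces {S' SV : Finset lam} {T' TV : Set (lam → Bool)}
    (h' : GoodPair S' T') (hV : GoodPair SV TV)
    (hsub : Hset SV TV ⊆ Hset S' T') : S' ⊆ SV ∧ T' = cproj S' '' TV := by
  have hA₁ : AofPair hV ∈ Hset S' T' := hsub (AofPair_mem hV)
  have hA₂ : TofPair hV ∈ Hset S' T' := hsub (TofPair_mem hV)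
  have hSS : S' ⊆ SV := by
    intro i hi
    by_contra hnot
    obtain ⟨σ₀, hσ₀⟩ := hV.1
    set x : lam → Bool := Function.update σ₀ i true with hx
    have hxA : x ∈ (AofPair hV).1 := by
      show cproj SV x ∈ TV
      have : cproj SV x = cproj SV σ₀ := by
        funext j
        by_cases hj : j ∈ SV
        · have hji : j ≠ i := fun e => hnot (e ▸ hj)
          simp [cproj, hj, hx, Function.update_of_ne hji]
        · simp [cproj, hj]
      rw [this, hV.2 σ₀ hσ₀]
      exact hσ₀
    have h1 : cproj S' x ∈ T' := by
      rw [show T' = cproj S' '' (AofPair hV).1 from hA₁.symm]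
      exact ⟨x, hxA, rfl⟩
    have h2 : cproj S' x ∈ cproj S' '' TV := by
      rw [show cproj S' '' TV = T' from hA₂]
      exact h1
    obtain ⟨σ, hσTV, hσx⟩ := h2
    have := congrFun hσx i
    have hl : σ i = false := by
      have := congrFun (hV.2 σ hσTV) i
      simpa [cproj, hnot] using this.symm
    have hr : x i = true := by simp [hx]
    rw [show cproj S' σ i = σ i from by simp [cproj, hi],
      show cproj S' x i = x i from by simp [cproj, hi]] at this
    rw [hl, hr] at this
    exact Bool.false_ne_true this
  refine ⟨hSS, ?_⟩
  have hT' : T' = cproj S' '' (AofPair hV).1 := hA₁.symm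
  have hTV : TV = cproj SV '' (AofPair hV).1 := (AofPair_mem hV).symm
  rw [hT']
  conv_rhs => rw [hTV]
  exact (image_cproj_sub hSS _).symm

/-- amalgamation of two compatible traces -/
lemma Hset_inter_nonempty {S SV : Finset lam} {T TV : Set (lam → Bool)}
    (hT : GoodPair S T) (hTV : GoodPair SV TV)
    (hproj : cproj (S ∩ SV) '' T = cproj (S ∩ SV) '' TV) :
    (Hset S T ∩ Hset SV TV).Nonempty := by
  set Am : Set (lam → Bool) := cproj S ⁻¹' T ∩ cproj SV ⁻¹' TV with hAm
  have hmix : ∀ σ ∈ TV, ∃ x ∈ Am, cproj SV x = σ := by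
    intro σ hσ
    have : cproj (S ∩ SV) σ ∈ cproj (S ∩ SV) '' T := by
      rw [hproj]
      exact ⟨σ, hσ, rfl⟩
    obtain ⟨τ, hτ, hτσ⟩ := this
    refine ⟨fun j => if j ∈ S then τ j else σ j, ⟨?_, ?_⟩, ?_⟩
    · show cproj S _ ∈ T
      have : cproj S (fun j => if j ∈ S then τ j else σ j) = cproj S τ := by
        funext j
        by_cases hj : j ∈ S <;> simp [cproj, hj]
      rw [this, hT.2 τ hτ]
      exact hτ
    · show cproj SV _ ∈ TV
      have : cproj SV (fun j => if j ∈ S then τ j else σ j) = cproj SV σ := by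
        funext j
        by_cases hj : j ∈ SV
        · by_cases hjS : j ∈ S
          · have hj' : j ∈ S ∩ SV := Finset.mem_inter.mpr ⟨hjS, hj⟩
            have := congrFun hτσ j
            simp only [cproj, if_pos hj'] at this
            simp [cproj, hj, hjS, this]
          · simp [cproj, hj, hjS]
        · simp [cproj, hj]
      rw [this, hTV.2 σ hσ]
      exact hσ
    · have : cproj SV (fun j => if j ∈ S then τ j else σ j) = cproj SV σ := by
        funext j
        by_cases hj : j ∈ SV
        · by_cases hjS : j ∈ S
          · have hj' : j ∈ S ∩ SV := Finset.mem_inter.mpr ⟨hjS, hj⟩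
            have := congrFun hτσ j
            simp only [cproj, if_pos hj'] at this
            simp [cproj, hj, hjS, this]
          · simp [cproj, hj, hjS]
        · simp [cproj, hj]
      rw [this, hTV.2 σ hσ]
  have hmix' : ∀ τ ∈ T, ∃ x ∈ Am, cproj S x = τ := by
    intro τ hτ
    have : cproj (S ∩ SV) τ ∈ cproj (S ∩ SV) '' TV := by
      rw [← hproj]
      exact ⟨τ, hτ, rfl⟩
    obtain ⟨σ, hσ, hστ⟩ := this
    refine ⟨fun j => if j ∈ S then τ j else σ j, ⟨?_, ?_⟩, ?_⟩
    · show cproj S _ ∈ T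
      have : cproj S (fun j => if j ∈ S then τ j else σ j) = cproj S τ := by
        funext j
        by_cases hj : j ∈ S <;> simp [cproj, hj]
      rw [this, hT.2 τ hτ]
      exact hτ
    · show cproj SV _ ∈ TV
      have : cproj SV (fun j => if j ∈ S then τ j else σ j) = cproj SV σ := by
        funext j
        by_cases hj : j ∈ SV
        · by_cases hjS : j ∈ S
          · have hj' : j ∈ S ∩ SV := Finset.mem_inter.mpr ⟨hjS, hj⟩
            have := congrFun hστ j
            simp only [cproj, if_pos hj'] at this
            simp [cproj, hj, hjS, this.symm]
          · simp [cproj, hj, hjS]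
        · simp [cproj, hj]
      rw [this, hTV.2 σ hσ]
      exact hσ
    · have : cproj S (fun j => if j ∈ S then τ j else σ j) = cproj S τ := by
        funext j
        by_cases hj : j ∈ S <;> simp [cproj, hj]
      rw [this, hT.2 τ hτ]
  have hAmcl : IsClosed Am :=
    (((goodPair_finite hT).isClosed).preimage (cproj_continuous S)).inter
      (((goodPair_finite hTV).isClosed).preimage (cproj_continuous SV))
  have hAmne : Am.Nonempty := by
    obtain ⟨σ, hσ⟩ := hTV.1
    obtain ⟨x, hx, -⟩ := hmix σ hσ
    exact ⟨x, hx⟩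
  refine ⟨⟨Am, hAmcl, hAmne⟩, ?_, ?_⟩
  · show cproj S '' Am = T
    apply subset_antisymm
    · rintro τ ⟨x, hx, rfl⟩
      exact hx.1
    · intro τ hτ
      obtain ⟨x, hx, hxτ⟩ := hmix' τ hτ
      exact ⟨x, hx, hxτ⟩
  · show cproj SV '' Am = TV
    apply subset_antisymm
    · rintro σ ⟨x, hx, rfl⟩
      exact hx.2
    · intro σ hσ
      obtain ⟨x, hx, hxσ⟩ := hmix σ hσ
      exact ⟨x, hx, hxσ⟩

/-- choose a basic trace witness inside an open set -/
def wit (V : Set (Hyper (lam → Bool))) : Finset lam × Set (lam → Bool) :=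
  if h : ∃ p : Finset lam × Set (lam → Bool), GoodPair p.1 p.2 ∧ Hset p.1 p.2 ⊆ V
  then Classical.choose h else (∅, ∅)

lemma wit_spec {V : Set (Hyper (lam → Bool))} (hV : IsOpen V) (hne : V.Nonempty) :
    GoodPair (wit V).1 (wit V).2 ∧ Hset (wit V).1 (wit V).2 ⊆ V := by
  obtain ⟨A, hA⟩ := hne
  obtain ⟨S, T, hG, -, hsub⟩ := exists_Hset_subset hV hA
  have hex : ∃ p : Finset lam × Set (lam → Bool), GoodPair p.1 p.2 ∧ Hset p.1 p.2 ⊆ V :=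
    ⟨(S, T), hG, hsub⟩
  rw [wit, dif_pos hex]
  exact Classical.choose_spec hex

/-- the coordinates recorded from a single Player II move -/
def SBmove (Bf : Set (Set (Hyper (lam → Bool)))) : Finset lam :=
  if h : Bf.Finite then h.toFinset.sup (fun V => (wit V).1) else ∅

lemma wit_sub_SBmove {Bf : Set (Set (Hyper (lam → Bool)))} (hf : Bf.Finite)
    {V : Set (Hyper (lam → Bool))} (hV : V ∈ Bf) : (wit V).1 ⊆ SBmove Bf := by
  rw [SBmove, dif_pos hf]
  exact Finset.le_sup (f := fun V => (wit V).1) (hf.mem_toFinset.mpr hV)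

/-- all coordinates recorded from a history -/
def Shist (h : List (Set (Set (Hyper (lam → Bool))))) : Finset lam :=
  (h.map SBmove).foldr (· ∪ ·) ∅

lemma SBmove_sub_Shist {h : List (Set (Set (Hyper (lam → Bool))))}
    {Bf : Set (Set (Hyper (lam → Bool)))} (hBf : Bf ∈ h) : SBmove Bf ⊆ Shist h :=
  subset_foldr_union h SBmove hBf

lemma Shist_mono {h₁ h₂ : List (Set (Set (Hyper (lam → Bool))))} :
    Shist h₁ ⊆ Shist (h₁ ++ h₂) := by
  induction h₁ with
  | nil => simp [Shist]
  | cons c l IH =>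
    intro i hi
    rw [Shist, List.cons_append, List.map_cons, List.foldr_cons] at *
    rcases Finset.mem_union.mp hi with hc | hl
    · exact Finset.mem_union_left _ hc
    · exact Finset.mem_union_right _ (IH hl)

/-- Player I's strategy on the hyperspace of the Cantor cube -/
def cubeStrat (h : List (Set (Set (Hyper (lam → Bool))))) :
    Set (Set (Hyper (lam → Bool))) :=
  (fun p : Finset lam × Set (lam → Bool) => Hset p.1 p.2) ''
    {p | p.1 ⊆ Shist h ∧ GoodPair p.1 p.2}

lemma cubeStrat_IMove (h : List (Set (Set (Hyper (lam → Bool))))) :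
    IMove (Hyper (lam → Bool)) (cubeStrat h) := by
  constructor
  · apply Set.Finite.image
    have hsub : {p : Finset lam × Set (lam → Bool) | p.1 ⊆ Shist h ∧ GoodPair p.1 p.2} ⊆
        {s : Finset lam | s ⊆ Shist h} ×ˢ {t | t ⊆ {f : lam → Bool | cproj (Shist h) f = f}} := by
      rintro ⟨S, T⟩ ⟨hS, hG⟩
      exact ⟨hS, fun σ hσ => cproj_fixed_mono hS (hG.2 σ hσ)⟩
    refine Set.Finite.subset (Set.Finite.prod ?_ ?_) hsub
    · exact Set.Finite.ofFinset (Shist h).powerset (fun s => by simp)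
    · exact (fixed_finite (Shist h)).finite_subsets
  · rintro U ⟨p, ⟨-, hG⟩, rfl⟩
    exact ⟨Hset_isOpen hG, Hset_nonempty hG⟩

theorem cube_hyper_IFavorable : IFavorable (Hyper (lam → Bool)) := by
  refine ⟨cubeStrat, fun h => cubeStrat_IMove h, ?_⟩
  intro B hB k
  rw [dense_iff_inter_open]
  intro U hU hUne
  obtain ⟨A, hAU⟩ := hUne
  obtain ⟨S, T, hGood, hAH, hHsub⟩ := exists_Hset_subset hU hAU
  set NatS : ℕ → Finset lam := fun n => Shist ((List.range n).map B) with hNatS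
  have hstep : ∀ n, NatS n ⊆ NatS (n + 1) := by
    intro n
    have he : (List.range (n + 1)).map B = (List.range n).map B ++ [B n] := by
      rw [List.range_succ, List.map_append]; rfl
    show Shist ((List.range n).map B) ⊆ Shist ((List.range (n + 1)).map B)
    rw [he]
    exact Shist_mono
  have hmono : ∀ {m n : ℕ}, m ≤ n → NatS m ⊆ NatS n := by
    intro m n hmn
    induction n, hmn using Nat.le_induction with
    | base => exact subset_rfl
    | succ n hmn IH => exact IH.trans (hstep n)
  -- the coordinates of S that are eventually recorded
  set S' : Finset lam := S.filter (fun i => ∃ n, i ∈ NatS n) with hS'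
  have hbound : ∃ m, ∀ i ∈ S', i ∈ NatS m := by
    set g : lam → ℕ := fun i => if h : ∃ n, i ∈ NatS n then Nat.find h else 0 with hg
    refine ⟨S'.sup g, fun i hi => ?_⟩
    have hex : ∃ n, i ∈ NatS n := (Finset.mem_filter.mp hi).2
    have h1 : i ∈ NatS (Nat.find hex) := Nat.find_spec hex
    have h2 : g i ≤ S'.sup g := Finset.le_sup hi
    have h3 : g i = Nat.find hex := by rw [hg]; simp [hex]
    exact hmono (h3 ▸ h2) h1
  obtain ⟨m, hm⟩ := hbound
  set n := max m k with hn
  set T' : Set (lam → Bool) := cproj S' '' T with hT'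
  have hGood' : GoodPair S' T' :=
    ⟨hGood.1.image _, by rintro σ ⟨τ, hτ, rfl⟩; exact cproj_idem S' τ⟩
  have htask : Hset S' T' ∈ cubeStrat ((List.range n).map B) := by
    refine ⟨(S', T'), ⟨?_, hGood'⟩, rfl⟩
    intro i hi
    exact hmono (le_max_left m k) (hm i hi)
  obtain ⟨V, hVBn, hVsub⟩ := (hB n).2 _ htask
  have hVopen : IsOpen V := ((hB n).1.2 V hVBn).1
  have hVne : V.Nonempty := ((hB n).1.2 V hVBn).2
  obtain ⟨hwitG, hwitsub⟩ := wit_spec hVopen hVne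
  set SV := (wit V).1
  set TV := (wit V).2
  have hSVsub : SV ⊆ NatS (n + 1) := by
    have h1 : SV ⊆ SBmove (B n) := wit_sub_SBmove (hB n).1.1 hVBn
    have h2 : SBmove (B n) ⊆ NatS (n + 1) := by
      apply SBmove_sub_Shist
      rw [List.range_succ, List.map_append]
      exact List.mem_append_right _ (by simp)
    exact h1.trans h2
  obtain ⟨hS'SV, hT'eq⟩ := Hset_subset_forces hGood' hwitG (hwitsub.trans hVsub)
  have hSinter : S ∩ SV = S' := by
    ext i
    simp only [Finset.mem_inter]
    constructor
    · rintro ⟨hiS, hiSV⟩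
      rw [hS']
      exact Finset.mem_filter.mpr ⟨hiS, ⟨n + 1, hSVsub hiSV⟩⟩
    · intro hi
      exact ⟨Finset.filter_subset _ _ hi, hS'SV hi⟩
  have hproj : cproj (S ∩ SV) '' T = cproj (S ∩ SV) '' TV := by
    rw [hSinter, ← hT', ← hT'eq]
  obtain ⟨Am, hAmS, hAmSV⟩ := Hset_inter_nonempty hGood hwitG hproj
  refine ⟨Am, hHsub hAmS, ?_⟩
  refine mem_iUnion.mpr ⟨n, mem_iUnion.mpr ⟨le_max_right m k, ?_⟩⟩
  exact ⟨V, hVBn, hwitsub hAmSV⟩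

end Part2

/-- For any index set `λ`, the hyperspace `exp (D^λ)` of the Cantor cube with
the Vietoris topology is universally Kuratowski-Ulam*. -/
theorem hyper_cantorCube_uKUstar (lam : Type*) :
    ∀ (Z : Type u) [TopologicalSpace Z]
      (E : Set (Z × Hyper (lam → Bool))), IsNowhereDense E →
        IsMeagre {x : Z |
          ¬ IsNowhereDense {z : Hyper (lam → Bool) | (x, z) ∈ E}} := by
  intro Z _ E hE
  exact ifavorable_uKUstar cube_hyper_IFavorable Z E hE
end
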